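/- arXiv:2004.07308 — 6 statements merged into one kernel-verified Lean document; each statement's English description precedes it below -/
import Mathlib

section
/- Every Scrope complex has reduced Euler characteristic equal to 0, 1, or −1. -/
namespace ScropePaper

/-- The generator `φ = [1, k-1] \ [x, y-1]`. -/
def scrPhi (k x y : ℕ) : Finset ℕ := Finset.Icc 1 (k - 1) \ Finset.Icc x (y - 1)

/-- The Scrope complex `Scr(k, z)` generated by the sets `φ_i`, as a set of faces. -/
def Scr (k : ℕ) (z : List (ℕ × ℕ)) : Finset (Finset ℕ) :=
  (Finset.Icc 1 (k - 1)).powerset.filter fun σ => ∃ p ∈ z, σ ⊆ scrPhi k p.1 p.2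

/-- A Scrope complex on `{1, …, k-1}` is either the full simplex or of the form `Scr(k, z)`
for a list `z` of pairs `(x, y)` with `1 ≤ x < y ≤ k`. -/
def IsScrope (k : ℕ) (S : Finset (Finset ℕ)) : Prop :=
  S = (Finset.Icc 1 (k - 1)).powerset ∨
    ∃ z : List (ℕ × ℕ), (∀ p ∈ z, 1 ≤ p.1 ∧ p.1 < p.2 ∧ p.2 ≤ k) ∧ S = Scr k z

/-- The reduced Euler characteristic `χ̃(Σ) = ∑_{σ ∈ Σ} (-1)^{|σ| - 1}`
(the empty face contributes `-1`). -/
def reducedEuler (S : Finset (Finset ℕ)) : ℤ := ∑ σ ∈ S, (-1 : ℤ) ^ (σ.card + 1)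

/-- Signed sum over subsets of `[a, n]` that meet every interval in `F`. -/
def tsum (n a : ℕ) (F : Finset (ℕ × ℕ)) : ℤ :=
  ∑ σ ∈ (Finset.Icc a n).powerset,
    if ∀ p ∈ F, (σ ∩ Finset.Icc p.1 p.2).Nonempty then (-1 : ℤ) ^ σ.card else 0

lemma tsum_of_gt {n a : ℕ} (h : n < a) (F : Finset (ℕ × ℕ)) :
    tsum n a F = 0 ∨ tsum n a F = 1 := by
  unfold tsum
  rw [Finset.Icc_eq_empty (by omega), Finset.powerset_empty, Finset.sum_singleton]
  split_ifs with h
  · right; simp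
  · left; rfl

lemma sum_powerset_Icc_split {a n : ℕ} (han : a ≤ n) (g : Finset ℕ → ℤ) :
    ∑ σ ∈ (Finset.Icc a n).powerset, g σ
      = ∑ σ ∈ (Finset.Icc (a + 1) n).powerset, (g σ + g (insert a σ)) := by
  have hnotmem : a ∉ Finset.Icc (a + 1) n := by simp [Finset.mem_Icc]
  have hins : Finset.Icc a n = insert a (Finset.Icc (a + 1) n) := by
    ext x; simp only [Finset.mem_insert, Finset.mem_Icc]; omega
  have hdisj : Disjoint (Finset.Icc (a + 1) n).powerset
      ((Finset.Icc (a + 1) n).powerset.image (insert a)) := by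
    rw [Finset.disjoint_left]
    intro σ hσ hσ'
    obtain ⟨τ, hτ, rfl⟩ := Finset.mem_image.mp hσ'
    exact hnotmem (Finset.mem_powerset.mp hσ (Finset.mem_insert_self a τ))
  rw [hins, Finset.powerset_insert, Finset.sum_union hdisj, Finset.sum_image, ←
    Finset.sum_add_distrib]
  intro σ hσ τ hτ h
  have haσ : a ∉ σ := fun h' => hnotmem (Finset.mem_powerset.mp hσ h')
  have haτ : a ∉ τ := fun h' => hnotmem (Finset.mem_powerset.mp hτ h')
  rw [← Finset.erase_insert haσ, ← Finset.erase_insert haτ, h]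

lemma tsum_zero {n a : ℕ} (han : a ≤ n) {F : Finset (ℕ × ℕ)}
    (hA : ∀ p ∈ F, a ∉ Finset.Icc p.1 p.2) : tsum n a F = 0 := by
  unfold tsum
  rw [sum_powerset_Icc_split han]
  refine Finset.sum_eq_zero fun σ hσ => ?_
  have haσ : a ∉ σ := by
    intro h'
    have := Finset.mem_Icc.mp (Finset.mem_powerset.mp hσ h')
    omega
  have hcond : (∀ p ∈ F, ((insert a σ) ∩ Finset.Icc p.1 p.2).Nonempty) ↔
      (∀ p ∈ F, (σ ∩ Finset.Icc p.1 p.2).Nonempty) := by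
    refine forall₂_congr fun p hp => ?_
    have : (insert a σ) ∩ Finset.Icc p.1 p.2 = σ ∩ Finset.Icc p.1 p.2 := by
      ext x
      simp only [Finset.mem_inter, Finset.mem_insert]
      constructor
      · rintro ⟨rfl | hx, hx2⟩
        · exact absurd hx2 (hA p hp)
        · exact ⟨hx, hx2⟩
      · exact fun ⟨hx, hx2⟩ => ⟨Or.inr hx, hx2⟩
    rw [this]
  have hcard : (insert a σ).card = σ.card + 1 := Finset.card_insert_of_notMem haσ
  rw [if_congr hcond rfl rfl]
  split_ifs
  · rw [hcard, pow_succ]; ring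
  · ring

lemma tsum_rec {n a : ℕ} (han : a ≤ n) {F : Finset (ℕ × ℕ)}
    (hA : ∃ p ∈ F, a ∈ Finset.Icc p.1 p.2) :
    ∃ y, a ≤ y ∧
      tsum n a F = - tsum n (y + 1) (F.filter fun p => a ∉ Finset.Icc p.1 p.2) := by
  classical
  set A := F.filter (fun p => a ∈ Finset.Icc p.1 p.2) with hAdef
  have hAne : (A.image Prod.snd).Nonempty := by
    obtain ⟨p, hp, hap⟩ := hA
    exact ⟨p.2, Finset.mem_image.mpr ⟨p, Finset.mem_filter.mpr ⟨hp, hap⟩, rfl⟩⟩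
  set y := (A.image Prod.snd).min' hAne with hydef
  obtain ⟨p₀, hp₀A, hp₀y⟩ := Finset.mem_image.mp ((A.image Prod.snd).min'_mem hAne)
  have hp₀F : p₀ ∈ F := (Finset.mem_filter.mp hp₀A).1
  have hap₀ : a ∈ Finset.Icc p₀.1 p₀.2 := (Finset.mem_filter.mp hp₀A).2
  have hay : a ≤ y :=
    le_of_le_of_eq (Finset.mem_Icc.mp hap₀).2 (hp₀y.trans hydef.symm)
  have hymin : ∀ p ∈ F, a ∈ Finset.Icc p.1 p.2 → y ≤ p.2 := fun p hp hap =>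
    Finset.min'_le _ _ (Finset.mem_image.mpr ⟨p, Finset.mem_filter.mpr ⟨hp, hap⟩, rfl⟩)
  refine ⟨y, hay, ?_⟩
  set B := F.filter (fun p => a ∉ Finset.Icc p.1 p.2) with hBdef
  have hBmem : ∀ p, p ∈ B ↔ p ∈ F ∧ a ∉ Finset.Icc p.1 p.2 := fun p => Finset.mem_filter
  -- Step 1: split off the element a
  unfold tsum
  rw [sum_powerset_Icc_split han]
  -- Step 2: pointwise identity
  have step2 : ∀ σ ∈ (Finset.Icc (a + 1) n).powerset,
      ((if ∀ p ∈ F, (σ ∩ Finset.Icc p.1 p.2).Nonempty then (-1 : ℤ) ^ σ.card else 0) +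
        (if ∀ p ∈ F, ((insert a σ) ∩ Finset.Icc p.1 p.2).Nonempty then
          (-1 : ℤ) ^ (insert a σ).card else 0))
      = - (if (∀ p ∈ B, (σ ∩ Finset.Icc p.1 p.2).Nonempty) ∧
            σ ∩ Finset.Icc (a + 1) y = ∅ then (-1 : ℤ) ^ σ.card else 0) := by
    intro σ hσ
    have hσsub : σ ⊆ Finset.Icc (a + 1) n := Finset.mem_powerset.mp hσ
    have hmemσ : ∀ x ∈ σ, a + 1 ≤ x ∧ x ≤ n := fun x hx => Finset.mem_Icc.mp (hσsub hx)
    have haσ : a ∉ σ := fun h' => by have := hmemσ a h'; omega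
    have hcard : (insert a σ).card = σ.card + 1 := Finset.card_insert_of_notMem haσ
    have hcondins : (∀ p ∈ F, ((insert a σ) ∩ Finset.Icc p.1 p.2).Nonempty) ↔
        (∀ p ∈ B, (σ ∩ Finset.Icc p.1 p.2).Nonempty) := by
      constructor
      · intro h p hpB
        obtain ⟨hpF, hnap⟩ := (hBmem p).mp hpB
        obtain ⟨x, hx⟩ := h p hpF
        have hx' := Finset.mem_inter.mp hx
        have hxa : x ≠ a := fun h' => hnap (h' ▸ hx'.2)
        exact ⟨x, Finset.mem_inter.mpr
          ⟨(Finset.mem_insert.mp hx'.1).resolve_left hxa, hx'.2⟩⟩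
      · intro h p hpF
        by_cases hap : a ∈ Finset.Icc p.1 p.2
        · exact ⟨a, Finset.mem_inter.mpr ⟨Finset.mem_insert_self a σ, hap⟩⟩
        · obtain ⟨x, hx⟩ := h p ((hBmem p).mpr ⟨hpF, hap⟩)
          have hx' := Finset.mem_inter.mp hx
          exact ⟨x, Finset.mem_inter.mpr ⟨Finset.mem_insert_of_mem hx'.1, hx'.2⟩⟩
    have hcondσ : (∀ p ∈ F, (σ ∩ Finset.Icc p.1 p.2).Nonempty) ↔
        ((∀ p ∈ B, (σ ∩ Finset.Icc p.1 p.2).Nonempty) ∧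
          (σ ∩ Finset.Icc (a + 1) y).Nonempty) := by
      constructor
      · intro h
        refine ⟨fun p hpB => h p ((hBmem p).mp hpB).1, ?_⟩
        obtain ⟨x, hx⟩ := h p₀ hp₀F
        have hx' := Finset.mem_inter.mp hx
        have h1 := hmemσ x hx'.1
        have h2 := Finset.mem_Icc.mp hx'.2
        exact ⟨x, Finset.mem_inter.mpr ⟨hx'.1, Finset.mem_Icc.mpr ⟨h1.1, by omega⟩⟩⟩
      · rintro ⟨hB', ⟨x, hx⟩⟩ p hp
        have hx' := Finset.mem_inter.mp hx
        have h1 := hmemσ x hx'.1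
        have h2 := Finset.mem_Icc.mp hx'.2
        by_cases hap : a ∈ Finset.Icc p.1 p.2
        · have h3 := Finset.mem_Icc.mp hap
          have h4 := hymin p hp hap
          exact ⟨x, Finset.mem_inter.mpr ⟨hx'.1, Finset.mem_Icc.mpr ⟨by omega, by omega⟩⟩⟩
        · exact hB' p ((hBmem p).mpr ⟨hp, hap⟩)
    rw [if_congr hcondins rfl rfl, if_congr hcondσ rfl rfl]
    by_cases hCb : ∀ p ∈ B, (σ ∩ Finset.Icc p.1 p.2).Nonempty
    · by_cases hCa : (σ ∩ Finset.Icc (a + 1) y).Nonempty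
      · rw [if_pos ⟨hCb, hCa⟩, if_pos hCb,
          if_neg (by
            rintro ⟨-, he⟩
            exact Finset.not_nonempty_iff_eq_empty.mpr he hCa),
          hcard, pow_succ]
        ring
      · rw [if_neg (by rintro ⟨-, h⟩; exact hCa h), if_pos hCb,
          if_pos ⟨hCb, Finset.not_nonempty_iff_eq_empty.mp hCa⟩, hcard, pow_succ]
        ring
    · rw [if_neg (fun h => hCb h.1), if_neg hCb, if_neg (fun h => hCb h.1)]
      ring
  rw [Finset.sum_congr rfl step2, Finset.sum_neg_distrib, neg_inj]
  -- Step 3: shrink the ground set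
  have hsub : (Finset.Icc (y + 1) n).powerset ⊆ (Finset.Icc (a + 1) n).powerset :=
    Finset.powerset_mono.mpr (Finset.Icc_subset_Icc (by omega) le_rfl)
  rw [← Finset.sum_subset hsub ?_]
  · refine Finset.sum_congr rfl fun σ hσ => ?_
    have hσsub : σ ⊆ Finset.Icc (y + 1) n := Finset.mem_powerset.mp hσ
    have hempty : σ ∩ Finset.Icc (a + 1) y = ∅ := by
      rw [Finset.eq_empty_iff_forall_notMem]
      intro x hx
      have hx' := Finset.mem_inter.mp hx
      have h1 := Finset.mem_Icc.mp (hσsub hx'.1)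
      have h2 := Finset.mem_Icc.mp hx'.2
      omega
    exact if_congr (by simp [hempty]) rfl rfl
  · intro σ hσ hσ'
    rw [if_neg]
    rintro ⟨-, hempty⟩
    refine hσ' (Finset.mem_powerset.mpr fun x hx => ?_)
    have h1 := Finset.mem_Icc.mp (Finset.mem_powerset.mp hσ hx)
    have h2 : x ∉ Finset.Icc (a + 1) y := fun h' =>
      (Finset.eq_empty_iff_forall_notMem.mp hempty x) (Finset.mem_inter.mpr ⟨hx, h'⟩)
    rw [Finset.mem_Icc] at h2 ⊢
    omega

lemma tsum_mem : ∀ (d n a : ℕ) (F : Finset (ℕ × ℕ)), n + 1 ≤ a + d →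
    tsum n a F = 0 ∨ tsum n a F = 1 ∨ tsum n a F = -1 := by
  intro d
  induction d with
  | zero =>
    intro n a F h
    rcases tsum_of_gt (show n < a by omega) F with h' | h'
    · exact Or.inl h'
    · exact Or.inr (Or.inl h')
  | succ d ih =>
    intro n a F h
    by_cases han : n < a
    · rcases tsum_of_gt han F with h' | h'
      · exact Or.inl h'
      · exact Or.inr (Or.inl h')
    · push_neg at han
      by_cases hA : ∃ p ∈ F, a ∈ Finset.Icc p.1 p.2
      · obtain ⟨y, hay, heq⟩ := tsum_rec han hA
        rw [heq]
        rcases ih n (y + 1) (F.filter fun p => a ∉ Finset.Icc p.1 p.2) (by omega)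
          with h' | h' | h'
        · rw [h']; exact Or.inl (by ring)
        · rw [h']; exact Or.inr (Or.inr rfl)
        · rw [h']; exact Or.inr (Or.inl (by ring))
      · push_neg at hA
        exact Or.inl (tsum_zero han hA)

lemma reducedEuler_Scr (k : ℕ) (z : List (ℕ × ℕ)) :
    reducedEuler (Scr k z)
      = tsum (k - 1) 1 ((z.map fun p : ℕ × ℕ => (p.1, p.2 - 1)).toFinset)
        - (if Finset.Icc 1 (k - 1) = ∅ then 1 else 0) := by
  unfold reducedEuler Scr
  rw [Finset.sum_filter]
  have key : ∀ σ ∈ (Finset.Icc 1 (k - 1)).powerset,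
      (if ∃ p ∈ z, σ ⊆ scrPhi k p.1 p.2 then (-1 : ℤ) ^ (σ.card + 1) else 0)
        = (if ∀ q ∈ (z.map fun p : ℕ × ℕ => (p.1, p.2 - 1)).toFinset,
            (σ ∩ Finset.Icc q.1 q.2).Nonempty then (-1 : ℤ) ^ σ.card else 0)
          - (-1 : ℤ) ^ σ.card := by
    intro σ hσ
    have hσsub : σ ⊆ Finset.Icc 1 (k - 1) := Finset.mem_powerset.mp hσ
    have hiff : (∃ p ∈ z, σ ⊆ scrPhi k p.1 p.2) ↔
        ¬ ∀ q ∈ (z.map fun p : ℕ × ℕ => (p.1, p.2 - 1)).toFinset,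
            (σ ∩ Finset.Icc q.1 q.2).Nonempty := by
      rw [not_forall]
      constructor
      · rintro ⟨p, hp, hsub⟩
        refine ⟨(p.1, p.2 - 1), ?_⟩
        rw [Classical.not_imp, List.mem_toFinset, List.mem_map]
        refine ⟨⟨p, hp, rfl⟩, ?_⟩
        rw [Finset.not_nonempty_iff_eq_empty, Finset.eq_empty_iff_forall_notMem]
        intro x hx
        have hx' := Finset.mem_inter.mp hx
        have := hsub hx'.1
        unfold scrPhi at this
        exact (Finset.mem_sdiff.mp this).2 hx'.2
      · rintro ⟨q, hq⟩
        rw [Classical.not_imp, List.mem_toFinset, List.mem_map] at hq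
        obtain ⟨⟨p, hp, rfl⟩, hne⟩ := hq
        rw [Finset.not_nonempty_iff_eq_empty, Finset.eq_empty_iff_forall_notMem] at hne
        refine ⟨p, hp, fun x hx => ?_⟩
        unfold scrPhi
        rw [Finset.mem_sdiff]
        exact ⟨hσsub hx, fun h' => hne x (Finset.mem_inter.mpr ⟨hx, h'⟩)⟩
    by_cases hpred : ∃ p ∈ z, σ ⊆ scrPhi k p.1 p.2
    · rw [if_pos hpred, if_neg (hiff.mp hpred), pow_succ]
      ring
    · rw [if_neg hpred, if_pos (by by_contra h; exact hpred (hiff.mpr h))]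
      ring
  rw [Finset.sum_congr rfl key, Finset.sum_sub_distrib,
    Finset.sum_powerset_neg_one_pow_card]
  unfold tsum
  rfl

/-- Every Scrope complex has reduced Euler characteristic `0`, `1` or `-1`. -/
theorem reducedEuler_of_isScrope (k : ℕ) (hk : 1 ≤ k) (S : Finset (Finset ℕ))
    (hS : IsScrope k S) :
    reducedEuler S = 0 ∨ reducedEuler S = 1 ∨ reducedEuler S = -1 := by
  rcases hS with hS | ⟨z, -, hS⟩
  · subst hS
    have : reducedEuler (Finset.Icc 1 (k - 1)).powerset
        = - ∑ σ ∈ (Finset.Icc 1 (k - 1)).powerset, (-1 : ℤ) ^ σ.card := by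
      unfold reducedEuler
      rw [← Finset.sum_neg_distrib]
      exact Finset.sum_congr rfl fun σ _ => by rw [pow_succ]; ring
    rw [this, Finset.sum_powerset_neg_one_pow_card]
    split_ifs
    · exact Or.inr (Or.inr (by ring))
    · exact Or.inl (by ring)
  · subst hS
    rw [reducedEuler_Scr]
    by_cases hV : Finset.Icc 1 (k - 1) = ∅
    · rw [if_pos hV]
      have h0 : k - 1 < 1 := by
        by_contra h
        push_neg at h
        exact (Finset.nonempty_iff_ne_empty.mp ⟨1, Finset.mem_Icc.mpr ⟨le_rfl, h⟩⟩) hV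
      rcases tsum_of_gt h0 ((z.map fun p : ℕ × ℕ => (p.1, p.2 - 1)).toFinset) with h' | h'
      · rw [h']; exact Or.inr (Or.inr (by ring))
      · rw [h']; exact Or.inl (by ring)
    · rw [if_neg hV, sub_zero]
      exact tsum_mem k (k - 1) 1 ((z.map fun p : ℕ × ℕ => (p.1, p.2 - 1)).toFinset) (by omega)

end ScropePaper
end

section
/- Every Scrope complex containing at least one nonempty face has geometric realization that is either contractible or homotopy equivalent to a sphere S^d for some d ≥ 0. -/
namespace ScropePaper

/-- The `j`-th standard basis vector of `ℝ^m` (vertices are labelled `1, …, m`). -/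
noncomputable def basisVec (m j : ℕ) : EuclideanSpace ℝ (Fin m) :=
  WithLp.toLp 2 (fun i : Fin m => if (i : ℕ) + 1 = j then 1 else 0)

/-- The geometric realization of a simplicial complex on `{1, …, m}`: the union over the
faces `σ` of the convex hulls of the corresponding standard basis vectors in `ℝ^m`. -/
noncomputable def geomReal (m : ℕ) (S : Finset (Finset ℕ)) : Set (EuclideanSpace ℝ (Fin m)) :=
  ⋃ σ ∈ S, convexHull ℝ {x | ∃ j ∈ σ, x = basisVec m j}

lemma geomReal_eq (m : ℕ) (S : Finset (Finset ℕ)) :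
    geomReal m S = ⋃ σ ∈ S, convexHull ℝ (basisVec m '' ↑σ) := by
  unfold geomReal
  refine Set.iUnion₂_congr fun σ hσ => ?_
  congr 1
  ext x; simp [Set.mem_image, eq_comm]

lemma basisVec_apply (m j : ℕ) (i : Fin m) :
    basisVec m j i = if (i : ℕ) + 1 = j then 1 else 0 := rfl

lemma basisVec_inj {m j₁ j₂ : ℕ} (h1 : j₁ ∈ Finset.Icc 1 m)
    (h : basisVec m j₁ = basisVec m j₂) : j₁ = j₂ := by
  simp only [Finset.mem_Icc] at h1
  by_contra hne
  have hi : j₁ - 1 < m := by omega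
  have := congrArg (fun v : EuclideanSpace ℝ (Fin m) => v ⟨j₁ - 1, hi⟩) h
  simp only [basisVec_apply] at this
  rw [if_pos (by omega), if_neg (by omega)] at this
  exact one_ne_zero this

/-- Coordinate functional. -/
noncomputable def co (m v : ℕ) : EuclideanSpace ℝ (Fin m) →L[ℝ] ℝ :=
  ∑ i ∈ Finset.univ.filter (fun i : Fin m => (i : ℕ) + 1 = v), EuclideanSpace.proj i

lemma co_basisVec (m v j : ℕ) (hv : v ∈ Finset.Icc 1 m) :
    co m v (basisVec m j) = if v = j then 1 else 0 := by
  simp only [Finset.mem_Icc] at hv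
  have hfil : Finset.univ.filter (fun i : Fin m => (i : ℕ) + 1 = v)
      = {⟨v - 1, by omega⟩} := by
    ext i
    simp [Fin.ext_iff]
    omega
  have hco : co m v (basisVec m j) = basisVec m j ⟨v - 1, by omega⟩ := by
    simp only [co, hfil, ContinuousLinearMap.coe_sum', Finset.sum_apply,
      Finset.sum_singleton]
    rfl
  rw [hco, basisVec_apply]
  congr 1
  simp only [eq_iff_iff]
  omega

/-- Extract convex-combination representation from hull membership. -/
lemma rep_of_mem_hull {m : ℕ} {σ : Finset ℕ} (hσ : σ ⊆ Finset.Icc 1 m)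
    {x : EuclideanSpace ℝ (Fin m)} (hx : x ∈ convexHull ℝ (basisVec m '' ↑σ)) :
    ∃ w : ℕ → ℝ, (∀ j, 0 ≤ w j) ∧ (∀ j, j ∉ σ → w j = 0) ∧
      (∑ j ∈ σ, w j) = 1 ∧ x = ∑ j ∈ σ, w j • basisVec m j := by
  classical
  rw [← Finset.coe_image, Finset.convexHull_eq] at hx
  obtain ⟨u, hu0, hus, hcm⟩ := hx
  have hinj : ∀ a ∈ σ, ∀ b ∈ σ, basisVec m a = basisVec m b → a = b := by
    intro a ha b hb h; exact basisVec_inj (hσ ha) h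
  refine ⟨fun j => if j ∈ σ then u (basisVec m j) else 0, ?_, ?_, ?_, ?_⟩
  · intro j
    by_cases h : j ∈ σ
    · simpa [h] using hu0 _ (Finset.mem_image_of_mem _ h)
    · simp [h]
  · intro j hj; simp [hj]
  · rw [Finset.sum_congr rfl (fun j hj => if_pos hj)]
    rw [← Finset.sum_image hinj]
    exact hus
  · rw [← hcm, Finset.centerMass_eq_of_sum_1 _ _ hus]
    rw [Finset.sum_image hinj]
    refine Finset.sum_congr rfl (fun j hj => ?_)
    simp [if_pos hj]

lemma mem_geomReal_of_rep {m : ℕ} {S : Finset (Finset ℕ)} {σ : Finset ℕ} (hσ : σ ∈ S)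
    (w : ℕ → ℝ) (h0 : ∀ j ∈ σ, 0 ≤ w j) (hs : (∑ j ∈ σ, w j) = 1) :
    (∑ j ∈ σ, w j • basisVec m j) ∈ geomReal m S := by
  rw [geomReal_eq]
  refine Set.mem_biUnion hσ ?_
  have := Finset.centerMass_mem_convexHull (s := basisVec m '' ↑σ) σ h0
    (by rw [hs]; norm_num) (z := basisVec m)
    (fun j hj => Set.mem_image_of_mem _ hj)
  rwa [Finset.centerMass_eq_of_sum_1 _ _ hs] at this

lemma mem_geomReal_iff {m : ℕ} {S : Finset (Finset ℕ)} (hSm : ∀ σ ∈ S, σ ⊆ Finset.Icc 1 m)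
    {x : EuclideanSpace ℝ (Fin m)} :
    x ∈ geomReal m S ↔ ∃ σ ∈ S, ∃ w : ℕ → ℝ, (∀ j, 0 ≤ w j) ∧ (∀ j, j ∉ σ → w j = 0) ∧
      (∑ j ∈ σ, w j) = 1 ∧ x = ∑ j ∈ σ, w j • basisVec m j := by
  constructor
  · intro hx
    rw [geomReal_eq] at hx
    rw [Set.mem_iUnion₂] at hx
    obtain ⟨σ, hσ, hxσ⟩ := hx
    obtain ⟨w, h0, hz, hs, hrep⟩ := rep_of_mem_hull (hSm σ hσ) hxσ
    exact ⟨σ, hσ, w, h0, hz, hs, hrep⟩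
  · rintro ⟨σ, hσ, w, h0, -, hs, rfl⟩
    exact mem_geomReal_of_rep hσ w (fun j _ => h0 j) hs

/-- The linear map sending `e_j ↦ e_{c j}`. -/
noncomputable def foldMap (m : ℕ) (c : ℕ → ℕ) :
    EuclideanSpace ℝ (Fin m) →L[ℝ] EuclideanSpace ℝ (Fin m) :=
  ∑ j : Fin m, (EuclideanSpace.proj j).smulRight (basisVec m (c ((j : ℕ) + 1)))

lemma foldMap_basisVec (m : ℕ) (c : ℕ → ℕ) {j : ℕ} (hj : j ∈ Finset.Icc 1 m) :
    foldMap m c (basisVec m j) = basisVec m (c j) := by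
  simp only [Finset.mem_Icc] at hj
  have hlt : j - 1 < m := by omega
  simp only [foldMap, ContinuousLinearMap.coe_sum', Finset.sum_apply,
    ContinuousLinearMap.smulRight_apply]
  have hval : ∀ i : Fin m, EuclideanSpace.proj i (basisVec m j)
      = if (i : ℕ) + 1 = j then 1 else 0 := fun i => rfl
  rw [Finset.sum_eq_single (⟨j - 1, hlt⟩ : Fin m)]
  · rw [hval]
    rw [if_pos (show (j-1) + 1 = j by omega)]
    rw [one_smul]
    show basisVec m (c (j - 1 + 1)) = basisVec m (c j)
    rw [Nat.sub_add_cancel hj.1]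
  · intro i _ hne
    rw [hval, if_neg (by simp [Fin.ext_iff] at hne ⊢; omega), zero_smul]
  · intro h; exact absurd (Finset.mem_univ _) h

lemma foldMap_fixes {m : ℕ} {c : ℕ → ℕ} {s : Set (EuclideanSpace ℝ (Fin m))}
    (hfix : ∀ y ∈ s, foldMap m c y = y) :
    ∀ x ∈ convexHull ℝ s, foldMap m c x = x := by
  intro x hx
  have hconv : Convex ℝ {x : EuclideanSpace ℝ (Fin m) | foldMap m c x = x} := by
    intro a ha b hb p q hp hq hpq
    simp only [Set.mem_setOf_eq] at *
    rw [map_add, map_smul, map_smul, ha, hb]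
  exact convexHull_min hfix hconv hx

lemma geomReal_mono {m : ℕ} {S S' : Finset (Finset ℕ)} (h : S' ⊆ S) :
    geomReal m S' ⊆ geomReal m S := by
  rw [geomReal_eq, geomReal_eq]
  exact Set.iUnion₂_mono' fun σ hσ => ⟨σ, h hσ, subset_rfl⟩

theorem foldEquiv (m : ℕ) (S S' : Finset (Finset ℕ)) (c : ℕ → ℕ)
    (hSm : ∀ σ ∈ S, σ ⊆ Finset.Icc 1 m)
    (h4 : S' ⊆ S)
    (h2 : ∀ σ ∈ S, σ.image c ∈ S')
    (h3 : ∀ σ ∈ S, σ ∪ σ.image c ∈ S)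
    (h5 : ∀ σ ∈ S', ∀ j ∈ σ, c j = j) :
    Nonempty (ContinuousMap.HomotopyEquiv (geomReal m S) (geomReal m S')) := by
  classical
  set F := foldMap m c with hF
  -- image of a hull
  have himg : ∀ σ ∈ S, ∀ x ∈ convexHull ℝ (basisVec m '' ↑σ),
      F x ∈ convexHull ℝ (basisVec m '' ↑(σ.image c)) := by
    intro σ hσ x hx
    obtain ⟨w, h0, hz, hs, rfl⟩ := rep_of_mem_hull (hSm σ hσ) hx
    have : F (∑ j ∈ σ, w j • basisVec m j) = ∑ j ∈ σ, w j • basisVec m (c j) := by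
      rw [map_sum]
      refine Finset.sum_congr rfl fun j hj => ?_
      rw [map_smul, hF, foldMap_basisVec m c (hSm σ hσ hj)]
    rw [this]
    have := Finset.centerMass_mem_convexHull (s := basisVec m '' ↑(σ.image c)) σ
      (fun j _ => h0 j) (by rw [hs]; norm_num) (z := fun j => basisVec m (c j))
      (fun j hj => Set.mem_image_of_mem _ (by simp; exact ⟨j, hj, rfl⟩))
    rwa [Finset.centerMass_eq_of_sum_1 _ _ hs] at this
  have hmapsto : ∀ x ∈ geomReal m S, F x ∈ geomReal m S' := by
    intro x hx
    rw [geomReal_eq] at hx ⊢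
    rw [Set.mem_iUnion₂] at hx
    obtain ⟨σ, hσ, hxσ⟩ := hx
    exact Set.mem_biUnion (h2 σ hσ) (himg σ hσ x hxσ)
  have hfixS' : ∀ x ∈ geomReal m S', F x = x := by
    intro x hx
    rw [geomReal_eq, Set.mem_iUnion₂] at hx
    obtain ⟨σ, hσ, hxσ⟩ := hx
    refine foldMap_fixes ?_ x hxσ
    rintro y ⟨j, hj, rfl⟩
    rw [foldMap_basisVec m c (hSm σ (h4 hσ) hj), h5 σ hσ j hj]
  have hline : ∀ a : ℝ, 0 ≤ a → a ≤ 1 → ∀ x ∈ geomReal m S,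
      (a • F x + (1 - a) • x) ∈ geomReal m S := by
    intro a ha0 ha1 x hx
    rw [geomReal_eq, Set.mem_iUnion₂] at hx
    obtain ⟨σ, hσ, hxσ⟩ := hx
    rw [geomReal_eq]
    refine Set.mem_biUnion (h3 σ hσ) ?_
    have hsub1 : convexHull ℝ (basisVec m '' ↑σ)
        ⊆ convexHull ℝ (basisVec m '' ↑(σ ∪ σ.image c)) := by
      refine convexHull_mono (Set.image_mono ?_)
      simp only [Finset.coe_union]
      exact Set.subset_union_left
    have hsub2 : convexHull ℝ (basisVec m '' ↑(σ.image c))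
        ⊆ convexHull ℝ (basisVec m '' ↑(σ ∪ σ.image c)) := by
      refine convexHull_mono (Set.image_mono ?_)
      simp only [Finset.coe_union]
      exact Set.subset_union_right
    exact (convex_convexHull ℝ _) (hsub2 (himg σ hσ x hxσ)) (hsub1 hxσ)
      ha0 (by linarith) (by ring)
  -- bundled maps
  let X := geomReal m S
  let Y := geomReal m S'
  have hYX : Y ⊆ X := geomReal_mono h4
  let f : C(↥X, ↥Y) := ⟨fun x => ⟨F x.1, hmapsto x.1 x.2⟩,
    ((foldMap m c).continuous.comp continuous_subtype_val).subtype_mk _⟩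
  let g : C(↥Y, ↥X) := ⟨fun y => ⟨y.1, hYX y.2⟩, continuous_subtype_val.subtype_mk _⟩
  have hfg : f.comp g = ContinuousMap.id ↥Y := by
    apply ContinuousMap.ext
    intro y
    apply Subtype.ext
    exact hfixS' y.1 y.2
  refine ⟨⟨f, g, ⟨?_⟩, by rw [hfg]⟩⟩
  -- homotopy from g ∘ f to id
  have hcont : Continuous (fun q : ↥unitInterval × ↥X =>
      ((1 - q.1.1) • F q.2.1 + (1 - (1 - q.1.1)) • q.2.1 : EuclideanSpace ℝ (Fin m))) := by
    have h1 : Continuous fun q : ↥unitInterval × ↥X => (q.1 : ℝ) :=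
      continuous_subtype_val.comp continuous_fst
    have h2 : Continuous fun q : ↥unitInterval × ↥X => q.2.1 :=
      continuous_subtype_val.comp continuous_snd
    exact (((continuous_const.sub h1).smul ((foldMap m c).continuous.comp h2)).add
      ((continuous_const.sub (continuous_const.sub h1)).smul h2))
  let H : C(↥unitInterval × ↥X, ↥X) := ⟨fun q =>
    ⟨(1 - q.1.1) • F q.2.1 + (1 - (1 - q.1.1)) • q.2.1,
      hline _ (by have := q.1.2.2; linarith) (by have := q.1.2.1; linarith) q.2.1 q.2.2⟩,
    hcont.subtype_mk _⟩
  refine ⟨H, ?_, ?_⟩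
  · intro x
    apply Subtype.ext
    show (1 - (0:ℝ)) • F x.1 + (1 - (1 - (0:ℝ))) • x.1 = F x.1
    simp
  · intro x
    apply Subtype.ext
    show (1 - (1:ℝ)) • F x.1 + (1 - (1 - (1:ℝ))) • x.1 = x.1
    simp

theorem apexContractible (m : ℕ) (S : Finset (Finset ℕ))
    (hSm : ∀ σ ∈ S, σ ⊆ Finset.Icc 1 m) (v : ℕ)
    (hvS : {v} ∈ S) (hapex : ∀ σ ∈ S, insert v σ ∈ S) :
    ContractibleSpace (geomReal m S) := by
  classical
  set S' : Finset (Finset ℕ) := S.filter (· ⊆ {v}) with hS'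
  have hvS' : ({v} : Finset ℕ) ∈ S' := by
    rw [hS', Finset.mem_filter]; exact ⟨hvS, subset_rfl⟩
  obtain ⟨e⟩ := foldEquiv m S S' (fun _ => v) hSm (Finset.filter_subset _ _)
    (by
      intro σ hσ
      rcases Finset.eq_empty_or_nonempty σ with rfl | hne
      · rw [Finset.image_empty, hS', Finset.mem_filter]
        exact ⟨hσ, Finset.empty_subset _⟩
      · rw [Finset.image_const hne]; exact hvS')
    (by
      intro σ hσ
      rcases Finset.eq_empty_or_nonempty σ with rfl | hne
      · simp only [Finset.image_empty, Finset.union_empty]; exact hσ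
      · rw [Finset.image_const hne]
        have : σ ∪ {v} = insert v σ := by
          rw [Finset.union_comm, ← Finset.insert_eq]
        rw [this]; exact hapex σ hσ)
    (by
      intro σ hσ j hj
      rw [hS', Finset.mem_filter] at hσ
      have := hσ.2 hj
      simp only [Finset.mem_singleton] at this
      rw [this])
  have hsingle : geomReal m S' = {basisVec m v} := by
    apply Set.Subset.antisymm
    · rw [geomReal_eq]
      refine Set.iUnion₂_subset fun σ hσ => ?_
      rw [hS', Finset.mem_filter] at hσ
      rcases Finset.subset_singleton_iff.mp hσ.2 with rfl | rfl
      · simp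
      · simp [convexHull_singleton]
    · intro x hx
      rw [Set.mem_singleton_iff] at hx
      subst hx
      rw [geomReal_eq]
      refine Set.mem_biUnion hvS' ?_
      exact subset_convexHull ℝ _ (by simp)
  have : ContractibleSpace (geomReal m S') := by
    rw [hsingle]
    exact Convex.contractibleSpace (convex_singleton _) ⟨_, rfl⟩
  exact e.contractibleSpace

section SphereSection

variable (V : Finset ℕ) (d : ℕ)

/-- Enumeration of the vertex set. -/
noncomputable def vtx (hn : V.card = d + 2) : Fin (d + 2) → ℕ :=
  fun i => ((V.orderIsoOfFin hn) i : ℕ)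

noncomputable def iota (hn : V.card = d + 2) : ℕ → Fin (d + 2) :=
  fun v => if h : v ∈ V then (V.orderIsoOfFin hn).symm ⟨v, h⟩ else 0

lemma vtx_mem (hn : V.card = d + 2) (i : Fin (d + 2)) : vtx V d hn i ∈ V :=
  ((V.orderIsoOfFin hn) i).2

lemma vtx_inj (hn : V.card = d + 2) : Function.Injective (vtx V d hn) := by
  intro i j h
  exact (V.orderIsoOfFin hn).injective (Subtype.ext h)

lemma iota_vtx (hn : V.card = d + 2) (i : Fin (d + 2)) : iota V d hn (vtx V d hn i) = i := by
  unfold iota vtx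
  have hmem : (((V.orderIsoOfFin hn) i : ℕ)) ∈ V := vtx_mem V d hn i
  rw [dif_pos hmem]
  have : (⟨((V.orderIsoOfFin hn) i : ℕ), hmem⟩ : {x // x ∈ V})
      = (V.orderIsoOfFin hn) i := Subtype.ext rfl
  rw [this, OrderIso.symm_apply_apply]

lemma vtx_iota (hn : V.card = d + 2) {v : ℕ} (hv : v ∈ V) : vtx V d hn (iota V d hn v) = v := by
  unfold iota vtx
  rw [dif_pos hv]
  rw [OrderIso.apply_symm_apply]

lemma sum_V_eq {β : Type*} [AddCommMonoid β] (hn : V.card = d + 2) (f : ℕ → β) :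
    ∑ j ∈ V, f j = ∑ i : Fin (d + 2), f (vtx V d hn i) := by
  rw [← Finset.sum_coe_sort V f]
  exact (Fintype.sum_equiv (V.orderIsoOfFin hn).toEquiv
    (fun i => f (vtx V d hn i)) (fun x => f ↑x) (fun i => rfl)).symm

/-- The Minkowski-type gauge of the shifted simplex. -/
noncomputable def Ngauge (t : EuclideanSpace ℝ (Fin (d + 1))) : ℝ :=
  ((d : ℝ) + 2) * Finset.univ.sup' ⟨0, Finset.mem_univ 0⟩
    (fun i => max (-(t i)) (∑ j, t j))

lemma continuous_sup'_aux {ι X : Type*} [TopologicalSpace X] (s : Finset ι) (hs : s.Nonempty)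
    (f : ι → X → ℝ) (hf : ∀ i, Continuous (f i)) :
    Continuous fun x => s.sup' hs fun i => f i x := by
  induction hs using Finset.Nonempty.cons_induction with
  | singleton a =>
      have h : (fun x => ({a} : Finset ι).sup' ⟨a, Finset.mem_singleton_self a⟩
          fun i => f i x) = fun x => f a x := by
        funext x
        exact Finset.sup'_singleton _
      rw [h]
      exact hf a
  | cons a s ha hs ih =>
      have h : (fun x => (Finset.cons a s ha).sup' (Finset.cons_nonempty ha)
          fun i => f i x) = fun x => max (f a x) (s.sup' hs fun i => f i x) := by
        funext x
        exact Finset.sup'_cons hs _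
      rw [h]
      exact (hf a).max ih

lemma Ngauge_continuous : Continuous (Ngauge d) := by
  apply Continuous.mul continuous_const
  apply continuous_sup'_aux
  intro i
  exact ((EuclideanSpace.proj i).continuous.neg).max
    (continuous_finset_sum _ fun j _ => (EuclideanSpace.proj j).continuous)

lemma Ngauge_zero : Ngauge d 0 = 0 := by
  unfold Ngauge
  have : (fun i : Fin (d+1) => max (-((0 : EuclideanSpace ℝ (Fin (d+1))) i))
      (∑ j, (0 : EuclideanSpace ℝ (Fin (d+1))) j)) = fun _ => 0 := by
    funext i
    show max (-(0:ℝ)) (∑ _j : Fin (d+1), (0:ℝ)) = 0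
    simp
  rw [this]
  exact mul_eq_zero_of_right _ (Finset.sup'_const ..)

lemma Ngauge_smul {a : ℝ} (ha : 0 ≤ a) (t : EuclideanSpace ℝ (Fin (d + 1))) :
    Ngauge d (a • t) = a * Ngauge d t := by
  unfold Ngauge
  have h1 : (fun i : Fin (d+1) => max (-((a • t) i)) (∑ j, (a • t) j))
      = fun i => a * max (-(t i)) (∑ j, t j) := by
    funext i
    have hai : (a • t) i = a * t i := rfl
    have hsum : (∑ j, (a • t) j) = a * ∑ j, t j := by
      rw [Finset.mul_sum]
      exact Finset.sum_congr rfl fun j _ => rfl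
    rw [hai, hsum, mul_max_of_nonneg _ _ ha, mul_neg]
  rw [h1]
  have h2 : (Finset.univ.sup' (⟨0, Finset.mem_univ 0⟩ :
        (Finset.univ : Finset (Fin (d+1))).Nonempty)
        fun i => a * max (-(t i)) (∑ j, t j))
      = a * Finset.univ.sup' ⟨0, Finset.mem_univ 0⟩
        (fun i => max (-(t i)) (∑ j, t j)) :=
    (Finset.comp_sup'_eq_sup'_comp _ (fun x => a * x)
      (fun x y => mul_max_of_nonneg x y ha)).symm
  rw [h2]
  ring

lemma Ngauge_pos {t : EuclideanSpace ℝ (Fin (d + 1))} (ht : t ≠ 0) : 0 < Ngauge d t := by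
  rcases lt_or_ge 0 (Ngauge d t) with h | h
  · exact h
  exfalso
  apply ht
  unfold Ngauge at h
  have hd : (0:ℝ) < (d:ℝ) + 2 := by positivity
  have hsup : Finset.univ.sup' ⟨0, Finset.mem_univ 0⟩
      (fun i : Fin (d+1) => max (-(t i)) (∑ j, t j)) ≤ 0 := by
    nlinarith [Finset.le_sup' (fun i : Fin (d+1) => max (-(t i)) (∑ j, t j)) (Finset.mem_univ 0),
      le_max_left (-(t 0)) (∑ j, t j)]
  replace hsup := (Finset.sup'_le_iff ..).mp hsup
  have hnn : ∀ i : Fin (d+1), 0 ≤ t i := by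
    intro i
    have := (hsup i (Finset.mem_univ i))
    have := le_trans (le_max_left _ _) this
    linarith
  have hsum : (∑ j, t j) ≤ 0 :=
    le_trans (le_max_right (-(t 0)) _) (hsup 0 (Finset.mem_univ 0))
  apply PiLp.ext; intro i
  have h1 : t i ≤ ∑ j, t j :=
    Finset.single_le_sum (fun j _ => hnn j) (Finset.mem_univ i)
  have : t i = 0 := le_antisymm (by linarith) (hnn i)
  exact this

variable (m : ℕ)

/-- The affine map from the realization into `ℝ^{d+1}` (barycentric coords minus barycenter). -/
noncomputable def Ymap (hn : V.card = d + 2) (x : EuclideanSpace ℝ (Fin m)) :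
    EuclideanSpace ℝ (Fin (d + 1)) :=
  WithLp.toLp 2 (fun i : Fin (d + 1) => co m (vtx V d hn i.castSucc) x - 1 / ((d : ℝ) + 2))

/-- Barycentric weights associated to a point `t ∈ ℝ^{d+1}`. -/
noncomputable def qwt (t : EuclideanSpace ℝ (Fin (d + 1))) : Fin (d + 2) → ℝ :=
  fun i => Fin.lastCases (1 / ((d : ℝ) + 2) - ∑ j, t j) (fun i' => t i' + 1 / ((d : ℝ) + 2)) i

lemma qwt_castSucc (t : EuclideanSpace ℝ (Fin (d + 1))) (i : Fin (d + 1)) :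
    qwt d t i.castSucc = t i + 1 / ((d : ℝ) + 2) := by
  unfold qwt; rw [Fin.lastCases_castSucc]

lemma qwt_last (t : EuclideanSpace ℝ (Fin (d + 1))) :
    qwt d t (Fin.last (d + 1)) = 1 / ((d : ℝ) + 2) - ∑ j, t j := by
  unfold qwt; rw [Fin.lastCases_last]

lemma qwt_continuous (i : Fin (d + 2)) : Continuous fun t => qwt d t i := by
  induction i using Fin.lastCases with
  | last =>
      have : (fun t : EuclideanSpace ℝ (Fin (d+1)) => qwt d t (Fin.last (d+1)))
          = fun t => 1 / ((d : ℝ) + 2) - ∑ j, t j := by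
        funext t; exact qwt_last d t
      rw [this]
      exact continuous_const.sub (continuous_finset_sum _ fun j _ =>
        (EuclideanSpace.proj j).continuous)
  | cast i =>
      have : (fun t : EuclideanSpace ℝ (Fin (d+1)) => qwt d t i.castSucc)
          = fun t => t i + 1 / ((d : ℝ) + 2) := by
        funext t; exact qwt_castSucc d t i
      rw [this]
      exact (EuclideanSpace.proj i).continuous.add continuous_const

lemma qwt_sum (t : EuclideanSpace ℝ (Fin (d + 1))) :
    ∑ i : Fin (d + 2), qwt d t i = 1 := by
  rw [Fin.sum_univ_castSucc]
  rw [qwt_last]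
  have h1 : ∀ i : Fin (d+1), qwt d t i.castSucc = t i + 1/((d:ℝ)+2) := qwt_castSucc d t
  rw [Finset.sum_congr rfl (fun i _ => h1 i), Finset.sum_add_distrib,
    Finset.sum_const, Finset.card_univ, Fintype.card_fin]
  have hd : ((d : ℝ) + 2) ≠ 0 := by positivity
  have key : ((d:ℝ)+2) * (1/((d:ℝ)+2)) = 1 := mul_one_div_cancel hd
  rw [nsmul_eq_mul]; push_cast; linear_combination key

/-- Map back from `ℝ^{d+1}` to the ambient space. -/
noncomputable def Xi (hn : V.card = d + 2) (t : EuclideanSpace ℝ (Fin (d + 1))) :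
    EuclideanSpace ℝ (Fin m) :=
  ∑ i : Fin (d + 2), qwt d t i • basisVec m (vtx V d hn i)

lemma Xi_continuous (hn : V.card = d + 2) : Continuous (Xi V d m hn) := by
  unfold Xi
  exact continuous_finset_sum _ fun i _ => (qwt_continuous d i).smul continuous_const

/-- The weight function of `Xi t` on vertex labels. -/
noncomputable def wwt (hn : V.card = d + 2) (t : EuclideanSpace ℝ (Fin (d + 1))) : ℕ → ℝ :=
  fun j => if j ∈ V then qwt d t (iota V d hn j) else 0

lemma wwt_vtx (hn : V.card = d + 2) (t : EuclideanSpace ℝ (Fin (d + 1))) (i : Fin (d + 2)) :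
    wwt V d hn t (vtx V d hn i) = qwt d t i := by
  unfold wwt
  rw [if_pos (vtx_mem V d hn i), iota_vtx]

lemma Xi_eq_V_sum (hn : V.card = d + 2) (t : EuclideanSpace ℝ (Fin (d + 1))) :
    Xi V d m hn t = ∑ j ∈ V, wwt V d hn t j • basisVec m j := by
  rw [sum_V_eq V d hn (fun j => wwt V d hn t j • basisVec m j)]
  unfold Xi
  exact Finset.sum_congr rfl fun i _ => by rw [wwt_vtx]

lemma co_V_sum (hVm : V ⊆ Finset.Icc 1 m) (w : ℕ → ℝ) {v : ℕ} (hv : v ∈ V) :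
    co m v (∑ j ∈ V, w j • basisVec m j) = w v := by
  rw [map_sum]
  have h1 : ∀ j ∈ V, co m v (w j • basisVec m j) = if v = j then w j else 0 := by
    intro j hj
    rw [map_smul, co_basisVec m v j (hVm hv), smul_eq_mul]
    by_cases h : v = j <;> simp [h]
  rw [Finset.sum_congr rfl h1, Finset.sum_ite_eq, if_pos hv]

lemma Ymap_coord (hVm : V ⊆ Finset.Icc 1 m) (hn : V.card = d + 2) (w : ℕ → ℝ)
    (i : Fin (d + 1)) :
    Ymap V d m hn (∑ j ∈ V, w j • basisVec m j)
      = fun i : Fin (d+1) => w (vtx V d hn i.castSucc) - 1 / ((d : ℝ) + 2) := by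
  funext i
  show co m (vtx V d hn i.castSucc) _ - _ = _
  rw [co_V_sum V m hVm w (vtx_mem V d hn i.castSucc)]

lemma sum_sub_const (a : Fin (d+1) → ℝ) (c : ℝ) :
    ∑ i : Fin (d+1), (a i - c) = (∑ i : Fin (d+1), a i) - ((d:ℝ)+1) * c := by
  rw [Finset.sum_sub_distrib, Finset.sum_const, Finset.card_univ, Fintype.card_fin]
  push_cast
  ring

lemma Ymap_sum (hVm : V ⊆ Finset.Icc 1 m) (hn : V.card = d + 2) (w : ℕ → ℝ)
    (hs : ∑ j ∈ V, w j = 1) :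
    ∑ i : Fin (d+1), Ymap V d m hn (∑ j ∈ V, w j • basisVec m j) i
      = 1 / ((d : ℝ) + 2) - w (vtx V d hn (Fin.last (d+1))) := by
  rw [Ymap_coord V d m hVm hn w ⟨0, by omega⟩]
  rw [sum_sub_const]
  have h2 : ∑ i : Fin (d+2), w (vtx V d hn i) = 1 := by
    rw [← sum_V_eq V d hn w]; exact hs
  rw [Fin.sum_univ_castSucc] at h2
  have hd : ((d : ℝ) + 2) ≠ 0 := by positivity
  have : ∑ i : Fin (d+1), w (vtx V d hn i.castSucc)
      = 1 - w (vtx V d hn (Fin.last (d+1))) := by linarith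
  rw [this]
  field_simp
  ring

end SphereSection

theorem sphereEquiv (m : ℕ) (V : Finset ℕ) (d : ℕ) (hVm : V ⊆ Finset.Icc 1 m)
    (hn : V.card = d + 2) (S : Finset (Finset ℕ))
    (hS : ∀ σ : Finset ℕ, σ ∈ S ↔ σ ⊆ V ∧ σ ≠ V) :
    Nonempty (ContinuousMap.HomotopyEquiv (geomReal m S)
      (Metric.sphere (0 : EuclideanSpace ℝ (Fin (d + 1))) 1)) := by
  classical
  have hd : ((d : ℝ) + 2) ≠ 0 := by positivity
  have hSm : ∀ σ ∈ S, σ ⊆ Finset.Icc 1 m := fun σ hσ => ((hS σ).mp hσ).1.trans hVm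
  -- canonical representation of points of the realization
  have hrepx : ∀ x ∈ geomReal m S, ∃ w : ℕ → ℝ, (∀ j, 0 ≤ w j) ∧
      (∑ j ∈ V, w j) = 1 ∧ x = ∑ j ∈ V, w j • basisVec m j ∧ ∃ v₀ ∈ V, w v₀ = 0 := by
    intro x hx
    rw [mem_geomReal_iff hSm] at hx
    obtain ⟨σ, hσ, w, h0, hz, hs, hxe⟩ := hx
    obtain ⟨hσV, hσne⟩ := (hS σ).mp hσ
    have hsV : (∑ j ∈ V, w j) = 1 := by
      rw [← Finset.sum_subset hσV (fun j _ hj => hz j hj)]; exact hs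
    have hxV : x = ∑ j ∈ V, w j • basisVec m j := by
      rw [← Finset.sum_subset hσV (fun j _ hj => by rw [hz j hj, zero_smul])]; exact hxe
    obtain ⟨v₀, hv₀V, hv₀σ⟩ := Finset.exists_of_ssubset (lt_of_le_of_ne hσV hσne)
    exact ⟨w, h0, hsV, hxV, v₀, hv₀V, hz v₀ hv₀σ⟩
  have hmem_of : ∀ (w : ℕ → ℝ) (v₀ : ℕ), (∀ j, 0 ≤ w j) → (∑ j ∈ V, w j) = 1 →
      v₀ ∈ V → w v₀ = 0 → (∑ j ∈ V, w j • basisVec m j) ∈ geomReal m S := by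
    intro w v₀ h0 hs hv₀ hw0
    have hσS : V.erase v₀ ∈ S := by
      rw [hS]
      exact ⟨Finset.erase_subset _ _, (Finset.erase_ssubset hv₀).ne⟩
    have h1 : (∑ j ∈ V.erase v₀, w j) = 1 := by
      rw [Finset.sum_erase _ hw0]; exact hs
    have h2 : (∑ j ∈ V, w j • basisVec m j) = ∑ j ∈ V.erase v₀, w j • basisVec m j := by
      rw [Finset.sum_erase _ (by rw [hw0, zero_smul])]
    rw [h2]
    exact mem_geomReal_of_rep hσS w (fun j _ => h0 j) h1
  -- the gauge is 1 on the realization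
  set c1 : ℝ := 1 / ((d : ℝ) + 2) with hc1
  have hc1pos : 0 < c1 := by rw [hc1]; positivity
  have hN1 : ∀ x ∈ geomReal m S, Ngauge d (Ymap V d m hn x) = 1 := by
    intro x hx
    obtain ⟨w, h0, hs, hxe, v₀, hv₀, hw0⟩ := hrepx x hx
    have hco : Ymap V d m hn x = fun i : Fin (d+1) =>
        w (vtx V d hn i.castSucc) - c1 := by
      rw [hxe]; exact Ymap_coord V d m hVm hn w ⟨0, by omega⟩
    have hsumY : ∑ i : Fin (d+1), Ymap V d m hn x i = c1 - w (vtx V d hn (Fin.last (d+1))) := by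
      rw [hxe]; exact Ymap_sum V d m hVm hn w hs
    unfold Ngauge
    have hle : (Finset.univ.sup' ⟨0, Finset.mem_univ 0⟩
        fun i : Fin (d+1) => max (-(Ymap V d m hn x i)) (∑ j, Ymap V d m hn x j)) ≤ c1 := by
      refine (Finset.sup'_le_iff ..).mpr ?_
      intro i _
      apply max_le
      · rw [hco]
        have := h0 (vtx V d hn i.castSucc)
        simp only [neg_sub]
        linarith
      · rw [hsumY]
        have := h0 (vtx V d hn (Fin.last (d+1)))
        linarith
    have hge : c1 ≤ Finset.univ.sup' ⟨0, Finset.mem_univ 0⟩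
        fun i : Fin (d+1) => max (-(Ymap V d m hn x i)) (∑ j, Ymap V d m hn x j) := by
      set i₀ : Fin (d+2) := iota V d hn v₀ with hi₀
      have hvi₀ : vtx V d hn i₀ = v₀ := vtx_iota V d hn hv₀
      by_cases hlast : i₀ = Fin.last (d+1)
      · have hwlast : w (vtx V d hn (Fin.last (d+1))) = 0 := by
          rw [← hlast, hvi₀]; exact hw0
        have : (∑ j, Ymap V d m hn x j) = c1 := by
          rw [hsumY, hwlast, sub_zero]
        refine le_trans ?_ (Finset.le_sup' _ (Finset.mem_univ (0 : Fin (d+1))))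
        rw [← this]
        exact le_max_right _ _
      · have hlt : (i₀ : ℕ) < d + 1 :=
          lt_of_le_of_ne (Nat.lt_succ_iff.mp i₀.isLt) (fun h => hlast (Fin.ext h))
        have hcast : Fin.castSucc (⟨(i₀ : ℕ), hlt⟩ : Fin (d+1)) = i₀ := Fin.ext rfl
        have : -(Ymap V d m hn x ⟨(i₀ : ℕ), hlt⟩) = c1 := by
          rw [hco]
          show -(w (vtx V d hn (Fin.castSucc ⟨(i₀ : ℕ), hlt⟩)) - c1) = c1
          rw [hcast, hvi₀, hw0]
          ring
        refine le_trans ?_ (Finset.le_sup' _ (Finset.mem_univ (⟨(i₀ : ℕ), hlt⟩ : Fin (d+1))))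
        rw [← this]
        exact le_max_left _ _
    have : (Finset.univ.sup' ⟨0, Finset.mem_univ 0⟩
        fun i : Fin (d+1) => max (-(Ymap V d m hn x i)) (∑ j, Ymap V d m hn x j)) = c1 :=
      le_antisymm hle hge
    rw [this, hc1]
    field_simp
  have hYne : ∀ x ∈ geomReal m S, Ymap V d m hn x ≠ 0 := by
    intro x hx h0
    have := hN1 x hx
    rw [h0, Ngauge_zero] at this
    norm_num at this
  -- Xi ∘ Ymap = id on realization
  have hXi_Y : ∀ x ∈ geomReal m S, Xi V d m hn (Ymap V d m hn x) = x := by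
    intro x hx
    obtain ⟨w, h0, hs, hxe, v₀, hv₀, hw0⟩ := hrepx x hx
    have hco : Ymap V d m hn x = fun i : Fin (d+1) =>
        w (vtx V d hn i.castSucc) - c1 := by
      rw [hxe]; exact Ymap_coord V d m hVm hn w ⟨0, by omega⟩
    have hsumY : ∑ i : Fin (d+1), Ymap V d m hn x i
        = c1 - w (vtx V d hn (Fin.last (d+1))) := by
      rw [hxe]; exact Ymap_sum V d m hVm hn w hs
    have hq : ∀ i : Fin (d+2), qwt d (Ymap V d m hn x) i = w (vtx V d hn i) := by
      intro i
      induction i using Fin.lastCases with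
      | last =>
          rw [qwt_last, hsumY]; ring
      | cast i' =>
          rw [qwt_castSucc, hco]
          show w (vtx V d hn i'.castSucc) - c1 + c1 = _
          ring
    unfold Xi
    rw [Finset.sum_congr rfl (fun i _ => by rw [hq i])]
    rw [← sum_V_eq V d hn (fun j => w j • basisVec m j)]
    exact hxe.symm
  -- Ymap ∘ Xi = id
  have hY_Xi : ∀ t : EuclideanSpace ℝ (Fin (d+1)), Ymap V d m hn (Xi V d m hn t) = t := by
    intro t
    rw [Xi_eq_V_sum]
    apply WithLp.ofLp_injective 2
    rw [Ymap_coord V d m hVm hn _ ⟨0, by omega⟩]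
    funext i
    rw [wwt_vtx, qwt_castSucc]
    ring
  -- Xi maps the unit gauge sphere into the realization
  have hXiMem : ∀ t : EuclideanSpace ℝ (Fin (d+1)), Ngauge d t = 1 →
      Xi V d m hn t ∈ geomReal m S := by
    intro t ht
    have hsup : (Finset.univ.sup' ⟨0, Finset.mem_univ 0⟩
        fun i : Fin (d+1) => max (-(t i)) (∑ j, t j)) = c1 := by
      unfold Ngauge at ht
      rw [hc1]
      field_simp
      linarith [ht]
    have hcomp : ∀ i : Fin (d+1), -(t i) ≤ c1 ∧ (∑ j, t j) ≤ c1 := by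
      intro i
      have := Finset.le_sup' (fun i : Fin (d+1) => max (-(t i)) (∑ j, t j))
        (Finset.mem_univ i)
      rw [hsup] at this
      exact ⟨le_trans (le_max_left _ _) this, le_trans (le_max_right _ _) this⟩
    have hq0 : ∀ i : Fin (d+2), 0 ≤ qwt d t i := by
      intro i
      induction i using Fin.lastCases with
      | last => rw [qwt_last]; have := (hcomp ⟨0, by omega⟩).2; rw [hc1] at this; linarith
      | cast i' => rw [qwt_castSucc]; have := (hcomp i').1; rw [hc1] at this; linarith
    have hw0 : ∀ j, 0 ≤ wwt V d hn t j := by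
      intro j
      unfold wwt
      by_cases h : j ∈ V
      · rw [if_pos h]; exact hq0 _
      · rw [if_neg h]
    have hwsum : (∑ j ∈ V, wwt V d hn t j) = 1 := by
      rw [sum_V_eq V d hn (wwt V d hn t)]
      rw [Finset.sum_congr rfl (fun i _ => wwt_vtx V d hn t i)]
      exact qwt_sum d t
    -- find a vanishing coordinate
    obtain ⟨i₁, _, hsup_eq⟩ := Finset.exists_mem_eq_sup'
      (⟨0, Finset.mem_univ 0⟩ : (Finset.univ : Finset (Fin (d+1))).Nonempty)
      (fun i : Fin (d+1) => max (-(t i)) (∑ j, t j))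
    rw [hsup_eq] at hsup
    have hv₀ : ∃ v₀ ∈ V, wwt V d hn t v₀ = 0 := by
      rcases max_choice (-(t i₁)) (∑ j, t j) with hch | hch
      · refine ⟨vtx V d hn i₁.castSucc, vtx_mem _ _ _ _, ?_⟩
        rw [wwt_vtx, qwt_castSucc]
        rw [hch] at hsup
        linarith
      · refine ⟨vtx V d hn (Fin.last (d+1)), vtx_mem _ _ _ _, ?_⟩
        rw [wwt_vtx, qwt_last]
        rw [hch] at hsup
        linarith
    obtain ⟨v₀, hv₀V, hv₀0⟩ := hv₀
    rw [Xi_eq_V_sum]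
    exact hmem_of _ v₀ hw0 hwsum hv₀V hv₀0
  -- the two continuous maps
  have hYcont : Continuous (Ymap V d m hn) := by
    unfold Ymap
    exact (PiLp.continuous_toLp ..).comp <| continuous_pi fun i => (co m (vtx V d hn i.castSucc)).continuous.sub continuous_const
  set X := geomReal m S
  set Sph := Metric.sphere (0 : EuclideanSpace ℝ (Fin (d + 1))) 1
  have hnorm_ne : ∀ x : ↥X, ‖Ymap V d m hn x.1‖ ≠ 0 := by
    intro x
    rw [norm_ne_zero_iff]
    exact hYne x.1 x.2
  have hNpos : ∀ u : ↥Sph, 0 < Ngauge d u.1 := by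
    intro u
    apply Ngauge_pos
    intro h0
    have := u.2
    rw [mem_sphere_zero_iff_norm, h0] at this
    norm_num at this
  let Φ : ↥X → ↥Sph := fun x => ⟨‖Ymap V d m hn x.1‖⁻¹ • Ymap V d m hn x.1, by
    rw [mem_sphere_zero_iff_norm, norm_smul, norm_inv, norm_norm]
    exact inv_mul_cancel₀ (hnorm_ne x)⟩
  let Ψ : ↥Sph → ↥X := fun u => ⟨Xi V d m hn ((Ngauge d u.1)⁻¹ • u.1), by
    apply hXiMem
    rw [Ngauge_smul d (le_of_lt (inv_pos.mpr (hNpos u))) u.1]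
    exact inv_mul_cancel₀ (hNpos u).ne'⟩
  have hΦΨ : ∀ u, Φ (Ψ u) = u := by
    intro u
    apply Subtype.ext
    show ‖Ymap V d m hn (Xi V d m hn _)‖⁻¹ • Ymap V d m hn (Xi V d m hn _) = u.1
    rw [hY_Xi]
    have hu1 : ‖u.1‖ = 1 := mem_sphere_zero_iff_norm.mp u.2
    rw [norm_smul, norm_inv, Real.norm_eq_abs, abs_of_pos (hNpos u), hu1, mul_one]
    rw [inv_inv, smul_smul, mul_inv_cancel₀ (hNpos u).ne', one_smul]
  have hΨΦ : ∀ x, Ψ (Φ x) = x := by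
    intro x
    apply Subtype.ext
    show Xi V d m hn ((Ngauge d (‖Ymap V d m hn x.1‖⁻¹ • Ymap V d m hn x.1))⁻¹ •
      (‖Ymap V d m hn x.1‖⁻¹ • Ymap V d m hn x.1)) = x.1
    rw [Ngauge_smul d (le_of_lt (inv_pos.mpr (lt_of_le_of_ne (norm_nonneg _) (Ne.symm (hnorm_ne x))))) _, hN1 x.1 x.2, mul_one, inv_inv, smul_smul,
      mul_inv_cancel₀ (hnorm_ne x), one_smul]
    exact hXi_Y x.1 x.2
  have hΦcont : Continuous Φ := by
    apply Continuous.subtype_mk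
    have h1 : Continuous fun x : ↥X => Ymap V d m hn x.1 :=
      hYcont.comp continuous_subtype_val
    exact (h1.norm.inv₀ hnorm_ne).smul h1
  have hΨcont : Continuous Ψ := by
    apply Continuous.subtype_mk
    have h1 : Continuous fun u : ↥Sph => u.1 := continuous_subtype_val
    have h2 : Continuous fun u : ↥Sph => Ngauge d u.1 :=
      (Ngauge_continuous d).comp h1
    exact (Xi_continuous V d m hn).comp ((h2.inv₀ fun u => (hNpos u).ne').smul h1)
  exact ⟨(Homeomorph.mk ⟨Φ, Ψ, hΨΦ, hΦΨ⟩ hΦcont hΨcont).toHomotopyEquiv⟩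


/-- Abstract Scrope-type complex on vertex set `V` with interval data `Z`. -/
def SC (V : Finset ℕ) (Z : Finset (ℕ × ℕ)) : Finset (Finset ℕ) :=
  V.powerset.filter fun σ => ∃ p ∈ Z, Disjoint σ (Finset.Icc p.1 p.2)

lemma mem_SC {V : Finset ℕ} {Z : Finset (ℕ × ℕ)} {σ : Finset ℕ} :
    σ ∈ SC V Z ↔ σ ⊆ V ∧ ∃ p ∈ Z, Disjoint σ (Finset.Icc p.1 p.2) := by
  unfold SC
  rw [Finset.mem_filter, Finset.mem_powerset]

/-- Trace of an interval on the vertex set. -/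
def trc (V : Finset ℕ) (p : ℕ × ℕ) : Finset ℕ := Finset.Icc p.1 p.2 ∩ V

/-- The set of intervals containing a vertex. -/
def Tv (V : Finset ℕ) (Z : Finset (ℕ × ℕ)) (v : ℕ) : Finset (ℕ × ℕ) :=
  Z.filter (fun p => v ∈ Finset.Icc p.1 p.2)

lemma unbot'_min_mem {s : Finset ℕ} (hs : s.Nonempty) : s.min.untopD 0 ∈ s := by
  obtain ⟨a, ha⟩ := Finset.min_of_nonempty hs
  rw [ha, WithTop.untopD_coe]
  exact Finset.mem_of_min ha

lemma unbot'_min_le {s : Finset ℕ} {w : ℕ} (hw : w ∈ s) : s.min.untopD 0 ≤ w := by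
  obtain ⟨a, ha⟩ := Finset.min_of_nonempty ⟨w, hw⟩
  rw [ha, WithTop.untopD_coe]
  have := Finset.min_le hw
  rw [ha] at this
  exact_mod_cast this

lemma unbot'_max_mem {s : Finset ℕ} (hs : s.Nonempty) : s.max.unbotD 0 ∈ s := by
  obtain ⟨a, ha⟩ := Finset.max_of_nonempty hs
  rw [ha, WithBot.unbotD_coe]
  exact Finset.mem_of_max ha

lemma le_unbot'_max {s : Finset ℕ} {w : ℕ} (hw : w ∈ s) : w ≤ s.max.unbotD 0 := by
  obtain ⟨a, ha⟩ := Finset.max_of_nonempty ⟨w, hw⟩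
  rw [ha, WithBot.unbotD_coe]
  have := Finset.le_max hw
  rw [ha] at this
  exact_mod_cast this

/-- In the irreducible situation every trace is a single vertex. -/
lemma claimA (V : Finset ℕ) (Z : Finset (ℕ × ℕ))
    (hTne : ∀ v ∈ V, ∃ p ∈ Z, v ∈ Finset.Icc p.1 p.2)
    (hGne : ∀ p ∈ Z, (trc V p).Nonempty)
    (hGanti : ∀ p ∈ Z, ∀ q ∈ Z, p ≠ q → ¬ (trc V p ⊆ trc V q))
    (hTanti : ∀ v ∈ V, ∀ w ∈ V, v ≠ w → ¬ (Tv V Z w ⊆ Tv V Z v)) :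
    ∀ v ∈ V, ∀ p ∈ Z, v ∈ Finset.Icc p.1 p.2 → trc V p = {v} := by
  classical
  set mn : ℕ × ℕ → ℕ := fun p => (trc V p).min.untopD 0 with hmn
  set mx : ℕ × ℕ → ℕ := fun p => (trc V p).max.unbotD 0 with hmx
  -- L0
  have L0 : ∀ p ∈ Z, ∀ w ∈ V, mn p ≤ w → w ≤ mx p → w ∈ trc V p := by
    intro p hp w hwV h1 h2
    have hmnm : mn p ∈ trc V p := unbot'_min_mem (hGne p hp)
    have hmxm : mx p ∈ trc V p := unbot'_max_mem (hGne p hp)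
    unfold trc at hmnm hmxm ⊢
    rw [Finset.mem_inter, Finset.mem_Icc] at hmnm hmxm ⊢
    exact ⟨⟨le_trans hmnm.1.1 h1, le_trans h2 hmxm.1.2⟩, hwV⟩
  -- subset from endpoints
  have Lsub : ∀ p ∈ Z, ∀ q ∈ Z, mn q ≤ mn p → mx p ≤ mx q → trc V p ⊆ trc V q := by
    intro p hp q hq h1 h2 w hw
    have hwV : w ∈ V := (Finset.mem_inter.mp hw).2
    exact L0 q hq w hwV (le_trans h1 (unbot'_min_le hw)) (le_trans (le_unbot'_max hw) h2)
  -- distinct minima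
  have L1a : ∀ p ∈ Z, ∀ q ∈ Z, p ≠ q → mn p ≠ mn q := by
    intro p hp q hq hne heq
    rcases le_total (mx p) (mx q) with h | h
    · exact hGanti p hp q hq hne (Lsub p hp q hq (le_of_eq heq.symm) h)
    · exact hGanti q hq p hp (Ne.symm hne) (Lsub q hq p hp (le_of_eq heq) h)
  -- aligned maxima
  have L1b : ∀ p ∈ Z, ∀ q ∈ Z, mn p < mn q → mx p < mx q := by
    intro p hp q hq hlt
    by_contra hcon
    push_neg at hcon
    exact hGanti q hq p hp (fun h => lt_irrefl _ (h ▸ hlt))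
      (Lsub q hq p hp (le_of_lt hlt) hcon)
  -- sandwich
  have L2 : ∀ p ∈ Z, ∀ s ∈ Z, ∀ q ∈ Z, ∀ v, v ∈ trc V p → v ∈ trc V q →
      mn p < mn s → mn s < mn q → v ∈ trc V s := by
    intro p hp s hs q hq v hvp hvq h1 h2
    have hvV : v ∈ V := (Finset.mem_inter.mp hvp).2
    apply L0 s hs v hvV
    · exact le_trans (le_of_lt h2) (unbot'_min_le hvq)
    · exact le_trans (le_unbot'_max hvp) (le_of_lt (L1b p hp s hs h1))
  -- "Good v" : all intervals through v coincide
  have core : ∀ n : ℕ, ∀ v ∈ V, (∃ p ∈ Tv V Z v, mn p ≤ n) →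
      ∀ p ∈ Tv V Z v, ∀ q ∈ Tv V Z v, p = q := by
    intro n
    induction n using Nat.strong_induction_on with
    | _ n ihn =>
      intro v hv hex
      by_contra hbad
      push_neg at hbad
      obtain ⟨p₁, hp₁, q₁, hq₁, hpq₁⟩ := hbad
      -- argmin and argmax over Tv v
      have hTvne : (Tv V Z v).Nonempty := ⟨p₁, hp₁⟩
      obtain ⟨p₀, hp₀, hp₀min⟩ := Finset.exists_min_image (Tv V Z v) mn hTvne
      obtain ⟨q₀, hq₀, hq₀max⟩ := Finset.exists_max_image (Tv V Z v) mx hTvne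
      have hmemZ : ∀ r ∈ Tv V Z v, r ∈ Z ∧ v ∈ Finset.Icc r.1 r.2 := by
        intro r hr
        have := Finset.mem_filter.mp hr
        exact ⟨this.1, this.2⟩
      have hvtrc : ∀ r ∈ Tv V Z v, v ∈ trc V r := by
        intro r hr
        exact Finset.mem_inter.mpr ⟨(hmemZ r hr).2, hv⟩
      -- p₀ ≠ q₀
      have hp₀q₀ : p₀ ≠ q₀ := by
        intro heq
        apply hpq₁
        have hall : ∀ r ∈ Tv V Z v, r = p₀ := by
          intro r hr
          by_contra hrne
          apply hGanti r (hmemZ r hr).1 p₀ (hmemZ p₀ hp₀).1 hrne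
          exact Lsub r (hmemZ r hr).1 p₀ (hmemZ p₀ hp₀).1 (hp₀min r hr)
            (heq ▸ hq₀max r hr)
        rw [hall p₁ hp₁, hall q₁ hq₁]
      -- u in trace of p₀ but not of q₀
      have hmn_lt : mn p₀ < mn q₀ :=
        lt_of_le_of_ne (hp₀min q₀ hq₀) (L1a p₀ (hmemZ p₀ hp₀).1 q₀ (hmemZ q₀ hq₀).1 hp₀q₀)
      obtain ⟨u, hu_p₀, hu_q₀⟩ := Finset.not_subset.mp
        (hGanti p₀ (hmemZ p₀ hp₀).1 q₀ (hmemZ q₀ hq₀).1 hp₀q₀)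
      have huV : u ∈ V := (Finset.mem_inter.mp hu_p₀).2
      have huv : u ≠ v := by
        intro heq
        exact hu_q₀ (heq ▸ hvtrc q₀ hq₀)
      -- all intervals through u have min < mn q₀
      have hTu_lt : ∀ r ∈ Tv V Z u, mn r < mn q₀ := by
        intro r hr
        have hrZ := (Finset.mem_filter.mp hr).1
        have hur : u ∈ trc V r := Finset.mem_inter.mpr ⟨(Finset.mem_filter.mp hr).2, huV⟩
        by_contra hcon
        push_neg at hcon
        have hrq₀ : r ≠ q₀ := by
          intro heq
          exact hu_q₀ (heq ▸ hur)
        have hlt : mn q₀ < mn r :=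
          lt_of_le_of_ne hcon (Ne.symm (L1a r hrZ q₀ (hmemZ q₀ hq₀).1 hrq₀))
        exact hu_q₀ (L2 p₀ (hmemZ p₀ hp₀).1 q₀ (hmemZ q₀ hq₀).1 r hrZ u hu_p₀ hur
          hmn_lt hlt)
      -- p₀ ∈ Tv u
      have hp₀u : p₀ ∈ Tv V Z u := by
        apply Finset.mem_filter.mpr
        refine ⟨(hmemZ p₀ hp₀).1, (Finset.mem_inter.mp hu_p₀).1⟩
      -- some interval through u avoiding v
      obtain ⟨s, hsu, hsv⟩ := Finset.not_subset.mp (hTanti v hv u huV (Ne.symm huv))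
      have hsZ := (Finset.mem_filter.mp hsu).1
      have hsp₀ : s ≠ p₀ := by
        intro heq
        exact hsv (heq ▸ hp₀)
      -- mn s < mn p₀
      have hs_lt : mn s < mn p₀ := by
        by_contra hcon
        push_neg at hcon
        have hlt : mn p₀ < mn s := lt_of_le_of_ne hcon
          (L1a p₀ (hmemZ p₀ hp₀).1 s hsZ (Ne.symm hsp₀))
        have hlt2 : mn s < mn q₀ := hTu_lt s hsu
        have hvs : v ∈ trc V s := L2 p₀ (hmemZ p₀ hp₀).1 s hsZ q₀ (hmemZ q₀ hq₀).1 v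
          (hvtrc p₀ hp₀) (hvtrc q₀ hq₀) hlt hlt2
        exact hsv (Finset.mem_filter.mpr ⟨hsZ, (Finset.mem_inter.mp hvs).1⟩)
      -- descent
      have hmnp₀_le : mn p₀ ≤ n := by
        obtain ⟨p₂, hp₂, hp₂le⟩ := hex
        exact le_trans (hp₀min p₂ hp₂) hp₂le
      have hgood_u := ihn (mn s) (lt_of_lt_of_le hs_lt hmnp₀_le) u huV
        ⟨s, hsu, le_refl _⟩
      exact hsp₀ (hgood_u s hsu p₀ hp₀u)
  -- conclusion
  intro v hv p hp hvp
  have hgood : ∀ w ∈ V, ∀ r ∈ Tv V Z w, ∀ r' ∈ Tv V Z w, r = r' := by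
    intro w hw
    obtain ⟨r₀, hr₀Z, hr₀⟩ := hTne w hw
    have hr₀T : r₀ ∈ Tv V Z w := Finset.mem_filter.mpr ⟨hr₀Z, hr₀⟩
    exact core (mn r₀) w hw ⟨r₀, hr₀T, le_refl _⟩
  have hpT : p ∈ Tv V Z v := Finset.mem_filter.mpr ⟨hp, hvp⟩
  ext w
  simp only [Finset.mem_singleton]
  constructor
  · intro hw
    have hwV : w ∈ V := (Finset.mem_inter.mp hw).2
    have hpTw : p ∈ Tv V Z w :=
      Finset.mem_filter.mpr ⟨hp, (Finset.mem_inter.mp hw).1⟩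
    by_contra hne
    apply hTanti v hv w hwV (fun h => hne (h ▸ rfl))
    intro r hr
    rw [hgood w hwV r hr p hpTw]
    exact hpT
  · intro hw
    rw [hw]
    exact Finset.mem_inter.mpr ⟨hvp, hv⟩

/-- The desired conclusion, as a predicate. -/
def GoodS (m : ℕ) (S : Finset (Finset ℕ)) : Prop :=
  ContractibleSpace (geomReal m S) ∨ ∃ d : ℕ, Nonempty
    (ContinuousMap.HomotopyEquiv (geomReal m S)
      (Metric.sphere (0 : EuclideanSpace ℝ (Fin (d + 1))) 1))

lemma goodS_of_equiv {m : ℕ} {S S' : Finset (Finset ℕ)}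
    (e : Nonempty (ContinuousMap.HomotopyEquiv (geomReal m S) (geomReal m S')))
    (h : GoodS m S') : GoodS m S := by
  obtain ⟨e⟩ := e
  rcases h with h | ⟨d, ⟨e'⟩⟩
  · left
    exact e.contractibleSpace
  · right
    exact ⟨d, ⟨e.trans e'⟩⟩

theorem scMain (m : ℕ) : ∀ N : ℕ, ∀ (V : Finset ℕ) (Z : Finset (ℕ × ℕ)),
    V.card + Z.card ≤ N → V ⊆ Finset.Icc 1 m →
    (∃ σ ∈ SC V Z, σ.Nonempty) → GoodS m (SC V Z) := by
  classical
  intro N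
  induction N with
  | zero =>
      rintro V Z hN hVm ⟨σ, hσ, ⟨a, ha⟩⟩
      have hV : V = ∅ := Finset.card_eq_zero.mp (by omega)
      have := (mem_SC.mp hσ).1 ha
      rw [hV] at this
      exact absurd this (Finset.notMem_empty a)
  | succ N ih =>
      intro V Z hN hVm hne
      obtain ⟨σ₀, hσ₀, hσ₀ne⟩ := hne
      have hSm : ∀ σ ∈ SC V Z, σ ⊆ Finset.Icc 1 m :=
        fun σ hσ => ((mem_SC.mp hσ).1).trans hVm
      have hane := hσ₀ne
      obtain ⟨a₀, ha₀⟩ := hane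
      have hVne : V.Nonempty := ⟨a₀, (mem_SC.mp hσ₀).1 ha₀⟩
      obtain ⟨p₀, hp₀Z, -⟩ := (mem_SC.mp hσ₀).2
      have hempty : (∅ : Finset ℕ) ∈ SC V Z :=
        mem_SC.mpr ⟨Finset.empty_subset _, p₀, hp₀Z, Finset.disjoint_empty_left _⟩
      by_cases hstar : ∃ v ∈ V, ∀ σ ∈ SC V Z, insert v σ ∈ SC V Z
      · obtain ⟨v, hv, hins⟩ := hstar
        left
        have hvS : ({v} : Finset ℕ) ∈ SC V Z := by
          have := hins ∅ hempty
          simpa using this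
        exact apexContractible m (SC V Z) hSm v hvS hins
      by_cases hfold : ∃ v ∈ V, ∃ w ∈ V, v ≠ w ∧ Tv V Z w ⊆ Tv V Z v
      · obtain ⟨v, hv, w, hw, hvw, hTsub⟩ := hfold
        set c : ℕ → ℕ := fun j => if j = v then w else j with hc
        have hcw : ∀ {j σ}, σ ∈ SC V Z → j ∈ σ → c j ∈ V.erase v ∧
            (∀ p ∈ Z, Disjoint σ (Finset.Icc p.1 p.2) → c j ∉ Finset.Icc p.1 p.2) := by
          intro j σ hσ hj
          obtain ⟨hσV, -⟩ := mem_SC.mp hσ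
          by_cases hjv : j = v
          · subst hjv
            constructor
            · rw [hc]; simp only [if_pos rfl]
              exact Finset.mem_erase.mpr ⟨Ne.symm hvw, hw⟩
            · intro p hp hdisj
              have hjIcc : j ∉ Finset.Icc p.1 p.2 := Finset.disjoint_left.mp hdisj hj
              have hpTv : p ∉ Tv V Z j := fun h => hjIcc (Finset.mem_filter.mp h).2
              have hpTw : p ∉ Tv V Z w := fun h => hpTv (hTsub h)
              have : w ∉ Finset.Icc p.1 p.2 := by
                intro hcon
                exact hpTw (Finset.mem_filter.mpr ⟨hp, hcon⟩)
              rw [hc]; simpa using this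
          · constructor
            · rw [hc]; simp only [if_neg hjv]
              exact Finset.mem_erase.mpr ⟨hjv, hσV hj⟩
            · intro p hp hdisj
              rw [hc]; simp only [if_neg hjv]
              exact Finset.disjoint_left.mp hdisj hj
        have h2 : ∀ σ ∈ SC V Z, σ.image c ∈ SC (V.erase v) Z := by
          intro σ hσ
          obtain ⟨hσV, p, hp, hdisj⟩ := mem_SC.mp hσ
          apply mem_SC.mpr
          constructor
          · intro a ha
            obtain ⟨j, hj, rfl⟩ := Finset.mem_image.mp ha
            exact (hcw hσ hj).1
          · refine ⟨p, hp, Finset.disjoint_left.mpr ?_⟩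
            intro a ha
            obtain ⟨j, hj, rfl⟩ := Finset.mem_image.mp ha
            exact (hcw hσ hj).2 p hp hdisj
        have h3 : ∀ σ ∈ SC V Z, σ ∪ σ.image c ∈ SC V Z := by
          intro σ hσ
          obtain ⟨hσV, p, hp, hdisj⟩ := mem_SC.mp hσ
          apply mem_SC.mpr
          constructor
          · apply Finset.union_subset hσV
            intro a ha
            obtain ⟨j, hj, rfl⟩ := Finset.mem_image.mp ha
            exact Finset.mem_of_mem_erase (hcw hσ hj).1
          · refine ⟨p, hp, Finset.disjoint_left.mpr ?_⟩
            intro a ha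
            rcases Finset.mem_union.mp ha with h | h
            · exact Finset.disjoint_left.mp hdisj h
            · obtain ⟨j, hj, rfl⟩ := Finset.mem_image.mp h
              exact (hcw hσ hj).2 p hp hdisj
        have h4 : SC (V.erase v) Z ⊆ SC V Z := by
          intro σ hσ
          obtain ⟨hσV, hex⟩ := mem_SC.mp hσ
          exact mem_SC.mpr ⟨hσV.trans (Finset.erase_subset _ _), hex⟩
        have h5 : ∀ σ ∈ SC (V.erase v) Z, ∀ j ∈ σ, c j = j := by
          intro σ hσ j hj
          have := (mem_SC.mp hσ).1 hj
          rw [hc]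
          simp only [if_neg (Finset.mem_erase.mp this).1]
        have he := foldEquiv m (SC V Z) (SC (V.erase v) Z) c hSm h4 h2 h3 h5
        apply goodS_of_equiv he
        apply ih (V.erase v) Z
        · have h1 : v ∈ V := hv
          rw [Finset.card_erase_of_mem h1]
          have : 1 ≤ V.card := Finset.card_pos.mpr ⟨v, h1⟩
          omega
        · exact (Finset.erase_subset _ _).trans hVm
        · exact ⟨σ₀.image c, h2 σ₀ hσ₀, ⟨c a₀, Finset.mem_image_of_mem c ha₀⟩⟩
      by_cases hdrop : ∃ p ∈ Z, ∃ q ∈ Z, p ≠ q ∧ trc V p ⊆ trc V q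
      · obtain ⟨p, hp, q, hq, hpq, hsub⟩ := hdrop
        have heq : SC V Z = SC V (Z.erase q) := by
          ext σ
          rw [mem_SC, mem_SC]
          constructor
          · rintro ⟨hσV, r, hr, hdisj⟩
            refine ⟨hσV, ?_⟩
            by_cases hrq : r = q
            · subst hrq
              refine ⟨p, Finset.mem_erase.mpr ⟨hpq, hp⟩, Finset.disjoint_left.mpr ?_⟩
              intro a ha hIcc
              have haV : a ∈ V := hσV ha
              have : a ∈ trc V r := hsub (Finset.mem_inter.mpr ⟨hIcc, haV⟩)
              exact Finset.disjoint_left.mp hdisj ha (Finset.mem_inter.mp this).1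
            · exact ⟨r, Finset.mem_erase.mpr ⟨hrq, hr⟩, hdisj⟩
          · rintro ⟨hσV, r, hr, hdisj⟩
            exact ⟨hσV, r, Finset.mem_of_mem_erase hr, hdisj⟩
        rw [heq]
        apply ih V (Z.erase q)
        · rw [Finset.card_erase_of_mem hq]
          have : 1 ≤ Z.card := Finset.card_pos.mpr ⟨q, hq⟩
          omega
        · exact hVm
        · exact ⟨σ₀, heq ▸ hσ₀, hσ₀ne⟩
      -- final case : boundary of a simplex
      push_neg at hstar hfold hdrop
      have hTne : ∀ v ∈ V, ∃ p ∈ Z, v ∈ Finset.Icc p.1 p.2 := by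
        intro v hv
        by_contra hcon
        push_neg at hcon
        obtain ⟨σ, hσ, hbad⟩ := hstar v hv
        apply hbad
        obtain ⟨hσV, p, hp, hdisj⟩ := mem_SC.mp hσ
        apply mem_SC.mpr
        refine ⟨Finset.insert_subset hv hσV, p, hp, ?_⟩
        rw [Finset.disjoint_insert_left]
        exact ⟨hcon p hp, hdisj⟩
      have hGne : ∀ p ∈ Z, (trc V p).Nonempty := by
        intro p hp
        rw [Finset.nonempty_iff_ne_empty]
        intro hcon
        obtain ⟨v, hv⟩ := hVne
        obtain ⟨σ, hσ, hbad⟩ := hstar v hv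
        apply hbad
        obtain ⟨hσV, -⟩ := mem_SC.mp hσ
        apply mem_SC.mpr
        have hnotin : ∀ a ∈ V, a ∉ Finset.Icc p.1 p.2 := by
          intro a ha hIcc
          have : a ∈ trc V p := Finset.mem_inter.mpr ⟨hIcc, ha⟩
          rw [hcon] at this
          exact Finset.notMem_empty a this
        refine ⟨Finset.insert_subset hv hσV, p, hp, Finset.disjoint_left.mpr ?_⟩
        intro a ha
        rcases Finset.mem_insert.mp ha with rfl | h
        · exact hnotin a hv
        · exact hnotin a (hσV h)
      have hsingle := claimA V Z hTne hGne
        (fun p hp q hq hne => hdrop p hp q hq hne)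
        (fun v hv w hw hne => hfold v hv w hw hne)
      have hS : ∀ σ : Finset ℕ, σ ∈ SC V Z ↔ σ ⊆ V ∧ σ ≠ V := by
        intro σ
        rw [mem_SC]
        constructor
        · rintro ⟨hσV, p, hp, hdisj⟩
          refine ⟨hσV, ?_⟩
          rintro rfl
          obtain ⟨a, ha⟩ := hGne p hp
          obtain ⟨ha1, ha2⟩ := Finset.mem_inter.mp ha
          exact Finset.disjoint_left.mp hdisj ha2 ha1
        · rintro ⟨hσV, hσne⟩
          obtain ⟨v, hvV, hvσ⟩ := Finset.exists_of_ssubset (lt_of_le_of_ne hσV hσne)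
          obtain ⟨p, hp, hvp⟩ := hTne v hvV
          refine ⟨hσV, p, hp, Finset.disjoint_left.mpr ?_⟩
          intro a ha hIcc
          have : a ∈ trc V p := Finset.mem_inter.mpr ⟨hIcc, hσV ha⟩
          rw [hsingle v hvV p hp hvp] at this
          rw [Finset.mem_singleton] at this
          exact hvσ (this ▸ ha)
      have hV2 : 2 ≤ V.card := by
        obtain ⟨hσ₀V, hσ₀ne'⟩ := ((hS σ₀).mp hσ₀)
        obtain ⟨b, hbV, hbσ⟩ := Finset.exists_of_ssubset (lt_of_le_of_ne hσ₀V hσ₀ne')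
        have : a₀ ∈ V := hσ₀V ha₀
        have hab : a₀ ≠ b := fun h => hbσ (h ▸ ha₀)
        exact Finset.one_lt_card.mpr ⟨a₀, this, b, hbV, hab⟩
      right
      refine ⟨V.card - 2, sphereEquiv m V (V.card - 2) hVm (by omega) (SC V Z) hS⟩


/-- Every Scrope complex containing at least one nonempty face has geometric realization that
is either contractible or homotopy equivalent to a sphere `S^d` for some `d ≥ 0`. -/
theorem scrope_contractible_or_sphere (k : ℕ) (hk : 1 ≤ k) (S : Finset (Finset ℕ))
    (hS : IsScrope k S) (hne : ∃ σ ∈ S, σ.Nonempty) :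
    ContractibleSpace (geomReal (k - 1) S) ∨
      ∃ d : ℕ, Nonempty
        (ContinuousMap.HomotopyEquiv (geomReal (k - 1) S)
          (Metric.sphere (0 : EuclideanSpace ℝ (Fin (d + 1))) 1)) := by
  classical
  set m := k - 1 with hm
  rcases hS with hfull | ⟨z, hz, hSz⟩
  · have heq : S = SC (Finset.Icc 1 m) {((1:ℕ), (0:ℕ))} := by
      rw [hfull]
      ext σ
      rw [Finset.mem_powerset, mem_SC]
      constructor
      · intro h
        refine ⟨h, ((1:ℕ),(0:ℕ)), Finset.mem_singleton_self _, ?_⟩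
        show Disjoint σ (Finset.Icc 1 0)
        rw [Finset.Icc_eq_empty (by omega)]
        exact Finset.disjoint_empty_right _
      · exact fun h => h.1
    rw [heq] at hne ⊢
    exact scMain m _ (Finset.Icc 1 m) _ le_rfl subset_rfl hne
  · have heq : S = SC (Finset.Icc 1 m) ((z.map fun p => (p.1, p.2 - 1)).toFinset) := by
      rw [hSz]
      ext σ
      unfold Scr
      rw [Finset.mem_filter, Finset.mem_powerset, mem_SC]
      constructor
      · rintro ⟨h1, p, hp, h2⟩
        refine ⟨h1, (p.1, p.2 - 1), ?_, ?_⟩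
        · rw [List.mem_toFinset, List.mem_map]; exact ⟨p, hp, rfl⟩
        · unfold scrPhi at h2
          exact (Finset.subset_sdiff.mp h2).2
      · rintro ⟨h1, q, hq, h2⟩
        rw [List.mem_toFinset, List.mem_map] at hq
        obtain ⟨p, hp, rfl⟩ := hq
        refine ⟨h1, p, hp, ?_⟩
        unfold scrPhi
        rw [Finset.subset_sdiff]
        exact ⟨h1, h2⟩
    rw [heq] at hne ⊢
    exact scMain m _ _ _ le_rfl subset_rfl hne

end ScropePaper
end

section
/- Every Scrope complex on {1,…,k−1} is either the full simplex 2^{{1,…,k−1}} or equals Scr(k,z) for some list z = ((x_1,y_1),…,(x_r,y_r)) satisfying 1 ≤ x_1 < x_2 < ⋯ < x_r < k, 1 < y_1 < y_2 < ⋯ < y_r ≤ k, and x_i < y_i for every i. -/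
namespace ScropePaper

/-- Every Scrope complex on `{1, …, k-1}` is either the full simplex `2^{[1,k-1]}` or equals
`Scr(k, z)` for a list `z = ((x_1,y_1), …, (x_r,y_r))` with
`1 ≤ x_1 < ⋯ < x_r < k`, `1 < y_1 < ⋯ < y_r ≤ k` and `x_i < y_i` for every `i`. -/
theorem isScrope_normal_form (k : ℕ) (hk : 1 ≤ k) (S : Finset (Finset ℕ))
    (hS : IsScrope k S) :
    S = (Finset.Icc 1 (k - 1)).powerset ∨
      ∃ z : List (ℕ × ℕ),
        (∀ p ∈ z, 1 ≤ p.1 ∧ p.1 < p.2 ∧ p.2 ≤ k) ∧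
        (∀ p ∈ z, p.1 < k) ∧
        (∀ p ∈ z, 1 < p.2) ∧
        z.Pairwise (fun p q => p.1 < q.1 ∧ p.2 < q.2) ∧
        S = Scr k z := by
  rcases hS with h | ⟨z, hz, rfl⟩
  · exact Or.inl h
  right
  classical
  -- the set of pairs of `z` with minimal intervals
  set T : Finset (ℕ × ℕ) :=
    z.toFinset.filter (fun p => ∀ q ∈ z.toFinset, p.1 ≤ q.1 ∧ q.2 ≤ p.2 → q = p) with hT
  have hTz : ∀ p ∈ T, p ∈ z := by
    intro p hp
    exact List.mem_toFinset.mp (Finset.mem_filter.mp hp).1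
  have hTmin : ∀ p ∈ T, ∀ q ∈ z, p.1 ≤ q.1 ∧ q.2 ≤ p.2 → q = p := by
    intro p hp q hq hle
    exact (Finset.mem_filter.mp hp).2 q (List.mem_toFinset.mpr hq) hle
  -- every pair of `z` is dominated by a minimal one
  have hdom : ∀ p ∈ z, ∃ m ∈ T, p.1 ≤ m.1 ∧ m.2 ≤ p.2 := by
    intro p hp
    set t : Finset (ℕ × ℕ) := z.toFinset.filter (fun q => p.1 ≤ q.1 ∧ q.2 ≤ p.2) with ht
    have hpt : p ∈ t := Finset.mem_filter.mpr ⟨List.mem_toFinset.mpr hp, le_refl _, le_refl _⟩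
    obtain ⟨m, hm, hmin⟩ := Finset.exists_min_image t (fun q => q.2 - q.1) ⟨p, hpt⟩
    obtain ⟨hmz, hm1, hm2⟩ := Finset.mem_filter.mp hm
    refine ⟨m, Finset.mem_filter.mpr ⟨hmz, ?_⟩, hm1, hm2⟩
    intro q hq ⟨hq1, hq2⟩
    have hqt : q ∈ t := Finset.mem_filter.mpr ⟨hq, le_trans hm1 hq1, le_trans hq2 hm2⟩
    have hlen := hmin q hqt
    have hmb := hz m (List.mem_toFinset.mp hmz)
    have hqb := hz q (List.mem_toFinset.mp hq)
    have : q.1 = m.1 ∧ q.2 = m.2 := by omega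
    exact Prod.ext this.1 this.2
  -- sort `T` lexicographically
  set L : List (ℕ ×ₗ ℕ) :=
    (T.map (toLex : ℕ × ℕ ≃ ℕ ×ₗ ℕ).toEmbedding).sort (· ≤ ·) with hLdef
  set z' : List (ℕ × ℕ) := L.map ofLex with hz'def
  have hmemL : ∀ a : ℕ ×ₗ ℕ, a ∈ L → ofLex a ∈ T := by
    intro a ha
    rw [hLdef, Finset.mem_sort] at ha
    obtain ⟨b, hb, rfl⟩ := Finset.mem_map.mp ha
    exact hb
  have hmem : ∀ p : ℕ × ℕ, p ∈ z' ↔ p ∈ T := by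
    intro p
    constructor
    · intro hp
      obtain ⟨a, ha, rfl⟩ := List.mem_map.mp hp
      exact hmemL a ha
    · intro hp
      refine List.mem_map.mpr ⟨toLex p, ?_, rfl⟩
      rw [hLdef, Finset.mem_sort]
      exact Finset.mem_map.mpr ⟨p, hp, rfl⟩
  have hz'z : ∀ p ∈ z', p ∈ z := fun p hp => hTz p ((hmem p).mp hp)
  refine ⟨z', fun p hp => hz p (hz'z p hp), ?_, ?_, ?_, ?_⟩
  · intro p hp
    have := hz p (hz'z p hp); omega
  · intro p hp
    have := hz p (hz'z p hp); omega
  · -- pairwise strict monotonicity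
    rw [hz'def, List.pairwise_map]
    have hsorted : L.Pairwise (· < ·) := (Finset.sortedLT_sort _).pairwise
    refine hsorted.imp_of_mem ?_
    intro a b ha hb hab
    have haT := hmemL a ha
    have hbT := hmemL b hb
    rw [show a = toLex (ofLex a) from rfl, show b = toLex (ofLex b) from rfl,
      Prod.Lex.lt_iff] at hab
    set p := ofLex a
    set q := ofLex b
    have h1 : p.1 < q.1 := by
      rcases hab with h | ⟨h1, h2⟩
      · exact h
      · exfalso
        have := hTmin q hbT p (hTz p haT) ⟨le_of_eq h1.symm, le_of_lt h2⟩
        rw [this] at h2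
        exact lt_irrefl _ h2
    refine ⟨h1, ?_⟩
    by_contra h2
    push_neg at h2
    have := hTmin p haT q (hTz q hbT) ⟨le_of_lt h1, h2⟩
    rw [this] at h1
    exact lt_irrefl _ h1
  · -- Scr k z = Scr k z'
    ext σ
    simp only [Scr, Finset.mem_filter, Finset.mem_powerset]
    constructor
    · rintro ⟨hσ, p, hp, hsub⟩
      obtain ⟨m, hm, hm1, hm2⟩ := hdom p hp
      refine ⟨hσ, m, (hmem m).mpr hm, hsub.trans ?_⟩
      exact Finset.sdiff_subset_sdiff (le_refl _)
        (Finset.Icc_subset_Icc hm1 (Nat.sub_le_sub_right hm2 1))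
    · rintro ⟨hσ, p, hp, hsub⟩
      exact ⟨hσ, p, hz'z p hp, hsub⟩

end ScropePaper
end

section
/- The class of Scrope complexes is stable under taking induced subcomplexes: if Σ is a Scrope complex on {1,…,k−1} and T ⊆ {1,…,k−1}, then the induced subcomplex Σ|T = {σ ∈ Σ : σ ⊆ T}, after relabeling the vertices of T via the unique order-preserving bijection T → {1,…,|T|}, is a Scrope complex on {1,…,|T|}. -/
namespace ScropePaper

/-- The unique order-preserving bijection from a finite set `T ⊆ ℕ` onto `{1, …, |T|}`:
`j` is sent to (its index in the increasing enumeration of `T`) plus one. -/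
def relabel (T : Finset ℕ) (j : ℕ) : ℕ := (T.sort (· ≤ ·)).idxOf j + 1



lemma indexOf_eq_countP (l : List ℕ) (hl : l.Pairwise (· < ·)) {t : ℕ} (ht : t ∈ l) :
    l.idxOf t = l.countP (fun s => s < t) := by
  induction l with
  | nil => simp at ht
  | cons a l ih =>
    obtain ⟨ha, hl'⟩ := List.pairwise_cons.mp hl
    rcases eq_or_ne t a with rfl | hne
    · rw [List.idxOf_cons_self, List.countP_cons]
      have h0 : l.countP (fun s => s < t) = 0 :=
        List.countP_eq_zero.2 fun s hs => by simp [(ha s hs).not_gt]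
      simp [h0]
    · have htl : t ∈ l := by
        rcases List.mem_cons.mp ht with h | h
        · exact absurd h hne
        · exact h
      have hat : a < t := ha t htl
      rw [List.idxOf_cons_ne _ (Ne.symm hne), List.countP_cons, ih hl' htl]
      simp [hat]

lemma relabel_spec (T : Finset ℕ) {t : ℕ} (ht : t ∈ T) :
    relabel T t = (T.filter (· < t)).card + 1 := by
  have hsort : (T.sort (· ≤ ·)).Pairwise (· < ·) := (Finset.sortedLT_sort T).pairwise
  have hmem : t ∈ T.sort (· ≤ ·) := (Finset.mem_sort _).2 ht
  rw [relabel, indexOf_eq_countP _ hsort hmem]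
  congr 1
  have hperm : List.Perm (T.sort (· ≤ ·)) T.toList := Finset.sort_perm_toList _ _
  rw [hperm.countP_eq]
  have h1 : T.toList.countP (fun s => decide (s < t)) = Multiset.countP (· < t) T.val := by
    rw [← Multiset.coe_countP]
    congr 1
    exact Multiset.coe_toList _
  rw [h1]
  rw [Multiset.countP_eq_card_filter]
  rfl




lemma cnt_mono (T : Finset ℕ) {x y : ℕ} (h : x ≤ y) :
    (T.filter (· < x)).card ≤ (T.filter (· < y)).card := by
  apply Finset.card_le_card
  intro s hs
  rw [Finset.mem_filter] at *
  exact ⟨hs.1, lt_of_lt_of_le hs.2 h⟩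

lemma cnt_strict (T : Finset ℕ) {x t : ℕ} (ht : t ∈ T) (h : t < x) :
    (T.filter (· < t)).card < (T.filter (· < x)).card := by
  apply Finset.card_lt_card
  constructor
  · intro s hs
    rw [Finset.mem_filter] at *
    exact ⟨hs.1, lt_trans hs.2 h⟩
  · intro hsub
    have := hsub (Finset.mem_filter.2 ⟨ht, h⟩)
    simp at this

lemma cnt_lt_relabel_iff (T : Finset ℕ) {t : ℕ} (ht : t ∈ T) (x : ℕ) :
    (T.filter (· < x)).card < relabel T t ↔ x ≤ t := by
  rw [relabel_spec T ht]
  constructor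
  · intro h
    by_contra hx
    push_neg at hx
    have := cnt_strict T ht hx
    omega
  · intro h
    have := cnt_mono T h
    omega

lemma relabel_le_cnt_iff (T : Finset ℕ) {t : ℕ} (ht : t ∈ T) (y : ℕ) :
    relabel T t ≤ (T.filter (· < y)).card ↔ t < y := by
  rw [relabel_spec T ht]
  constructor
  · intro h
    by_contra hy
    push_neg at hy
    have := cnt_mono T hy
    omega
  · intro h
    have := cnt_strict T ht h
    omega

lemma relabel_mem (T : Finset ℕ) {t : ℕ} (ht : t ∈ T) :
    relabel T t ∈ Finset.Icc 1 T.card := by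
  rw [relabel_spec T ht, Finset.mem_Icc]
  refine ⟨by omega, ?_⟩
  have : (T.filter (· < t)).card < T.card := by
    apply Finset.card_lt_card
    constructor
    · exact Finset.filter_subset _ _
    · intro hsub
      have := hsub ht
      simp at this
  omega

lemma image_relabel (T : Finset ℕ) : T.image (relabel T) = Finset.Icc 1 T.card := by
  apply Finset.eq_of_subset_of_card_le
  · intro j hj
    obtain ⟨t, ht, rfl⟩ := Finset.mem_image.mp hj
    exact relabel_mem T ht
  · rw [Nat.card_Icc]
    have : (T.image (relabel T)).card = T.card := by
      apply Finset.card_image_of_injOn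
      intro s hs t ht hst
      rw [relabel_spec T hs, relabel_spec T ht] at hst
      by_contra hne
      rcases lt_or_gt_of_ne hne with h | h
      · have := cnt_strict T hs h; omega
      · have := cnt_strict T ht h; omega
    omega

lemma image_preimage (T : Finset ℕ) {τ : Finset ℕ} (hτ : τ ⊆ Finset.Icc 1 T.card) :
    (T.filter (fun t => relabel T t ∈ τ)).image (relabel T) = τ := by
  ext j
  simp only [Finset.mem_image, Finset.mem_filter]
  constructor
  · rintro ⟨t, ⟨ht, htm⟩, rfl⟩
    exact htm
  · intro hj
    have : j ∈ T.image (relabel T) := (image_relabel T) ▸ hτ hj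
    obtain ⟨t, ht, rfl⟩ := Finset.mem_image.mp this
    exact ⟨t, ⟨ht, hj⟩, rfl⟩

lemma image_powerset (T : Finset ℕ) :
    (T.powerset.image fun σ => σ.image (relabel T)) = (Finset.Icc 1 T.card).powerset := by
  ext τ
  simp only [Finset.mem_image, Finset.mem_powerset]
  constructor
  · rintro ⟨σ, hσ, rfl⟩
    intro j hj
    obtain ⟨t, ht, rfl⟩ := Finset.mem_image.mp hj
    exact relabel_mem T (hσ ht)
  · intro hτ
    exact ⟨T.filter (fun t => relabel T t ∈ τ), Finset.filter_subset _ _, image_preimage T hτ⟩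



/-- The class of Scrope complexes is stable under taking induced subcomplexes: if `Σ` is a
Scrope complex on `{1, …, k-1}` and `T ⊆ {1, …, k-1}`, then the induced subcomplex
`Σ|T = {σ ∈ Σ : σ ⊆ T}`, relabelled via the unique order-preserving bijection
`T → {1, …, |T|}`, is a Scrope complex on `{1, …, |T|}`. -/
theorem isScrope_induced (k : ℕ) (hk : 1 ≤ k) (S : Finset (Finset ℕ))
    (hS : IsScrope k S) (T : Finset ℕ) (hT : T ⊆ Finset.Icc 1 (k - 1)) :
    IsScrope (T.card + 1)
      ((S.filter fun σ => σ ⊆ T).image fun σ => σ.image (relabel T)) := by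
  rcases hS with rfl | ⟨z, hz, rfl⟩
  · left
    have hfilter : ((Finset.Icc 1 (k-1)).powerset.filter fun σ => σ ⊆ T) = T.powerset := by
      ext σ
      simp only [Finset.mem_filter, Finset.mem_powerset]
      exact ⟨fun h => h.2, fun h => ⟨h.trans hT, h⟩⟩
    rw [hfilter, image_powerset]
    simp
  · by_cases hfull : ∃ p ∈ z, ∀ t ∈ T, ¬(p.1 ≤ t ∧ t < p.2)
    · left
      obtain ⟨p, hp, hpt⟩ := hfull
      obtain ⟨hx1, hxy, hyk⟩ := hz p hp
      have hfilter : ((Scr k z).filter fun σ => σ ⊆ T) = T.powerset := by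
        ext σ
        simp only [Scr, Finset.mem_filter, Finset.mem_powerset]
        constructor
        · rintro ⟨_, h⟩; exact h
        · intro h
          refine ⟨⟨h.trans hT, p, hp, ?_⟩, h⟩
          intro t htσ
          have htT := h htσ
          have h1 := hT htT
          have h2 := hpt t htT
          rw [Finset.mem_Icc] at h1
          simp only [scrPhi, Finset.mem_sdiff, Finset.mem_Icc]
          omega
      rw [hfilter, image_powerset]
      simp
    · right
      push_neg at hfull
      refine ⟨z.map (fun p => ((T.filter (· < p.1)).card + 1, (T.filter (· < p.2)).card + 1)),
        ?_, ?_⟩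
      · intro q hq
        obtain ⟨p, hp, rfl⟩ := List.mem_map.mp hq
        obtain ⟨t, htT, ht1, ht2⟩ := hfull p hp
        have hm1 : (T.filter (· < p.1)).card ≤ (T.filter (· < t)).card := cnt_mono T ht1
        have hm2 : (T.filter (· < t)).card < (T.filter (· < p.2)).card := cnt_strict T htT ht2
        have hm3 : (T.filter (· < p.2)).card ≤ T.card :=
          Finset.card_le_card (Finset.filter_subset _ _)
        exact ⟨by omega, by omega, by omega⟩
      · ext τ
        simp only [Finset.mem_image, Finset.mem_filter, Scr, Finset.mem_powerset,
          List.mem_map]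
        constructor
        · rintro ⟨σ, ⟨⟨hσk, p, hp, hσφ⟩, hσT⟩, rfl⟩
          obtain ⟨hx1, hxy, hyk⟩ := hz p hp
          refine ⟨?_, ⟨_, ⟨p, hp, rfl⟩, ?_⟩⟩
          · intro j hj
            obtain ⟨t, htσ, rfl⟩ := Finset.mem_image.mp hj
            have := relabel_mem T (hσT htσ)
            simpa using this
          · intro j hj
            obtain ⟨t, htσ, rfl⟩ := Finset.mem_image.mp hj
            have htT := hσT htσ
            simp only [scrPhi, Finset.mem_sdiff, Finset.mem_Icc]
            have hmem := relabel_mem T htT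
            rw [Finset.mem_Icc] at hmem
            have hφ := hσφ htσ
            simp only [scrPhi, Finset.mem_sdiff, Finset.mem_Icc] at hφ
            have hiff1 := cnt_lt_relabel_iff T htT p.1
            have hiff2 := relabel_le_cnt_iff T htT p.2
            omega
        · rintro ⟨hτm, q, ⟨p, hp, rfl⟩, hτφ⟩
          obtain ⟨hx1, hxy, hyk⟩ := hz p hp
          have hτm' : τ ⊆ Finset.Icc 1 T.card := by simpa using hτm
          refine ⟨T.filter (fun t => relabel T t ∈ τ), ⟨⟨?_, p, hp, ?_⟩, Finset.filter_subset _ _⟩,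
            image_preimage T hτm'⟩
          · exact (Finset.filter_subset _ _).trans hT
          · intro t htσ
            rw [Finset.mem_filter] at htσ
            obtain ⟨htT, htτ⟩ := htσ
            have hφ := hτφ htτ
            simp only [scrPhi, Finset.mem_sdiff, Finset.mem_Icc] at hφ
            have h1 := hT htT
            rw [Finset.mem_Icc] at h1
            simp only [scrPhi, Finset.mem_sdiff, Finset.mem_Icc]
            have hiff1 := cnt_lt_relabel_iff T htT p.1
            have hiff2 := relabel_le_cnt_iff T htT p.2
            have hmem := relabel_mem T htT
            rw [Finset.mem_Icc] at hmem
            omega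

end ScropePaper
end

section
/- The class 𝒰 of all order-decomposable ordered complexes is a Hopf class. -/
set_option linter.unusedSectionVars false
set_option linter.unusedVariables false


namespace OrderedComplexes

variable {α : Type*} [DecidableEq α]

/-- A (downward closed) simplicial complex, as a finite set of faces. -/
def IsComplex (S : Finset (Finset α)) : Prop := ∀ σ ∈ S, ∀ τ ⊆ σ, τ ∈ S

/-- `σ` is a facet (maximal face) of the complex `S`. -/
def IsFacet (S : Finset (Finset α)) (σ : Finset α) : Prop :=
  σ ∈ S ∧ ∀ τ ∈ S, σ ⊆ τ → σ = τ

/-- A complex is pure if all of its facets have the same cardinality. -/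
def IsPure (S : Finset (Finset α)) : Prop :=
  ∀ σ τ, IsFacet S σ → IsFacet S τ → σ.card = τ.card

/-- The restriction `Σ|T = {σ ∈ Σ : σ ⊆ T}`. -/
def restrictC (S : Finset (Finset α)) (T : Finset α) : Finset (Finset α) :=
  S.filter (· ⊆ T)

/-- The link of `τ` in `Σ`: `{ρ ∈ Σ : ρ ∩ τ = ∅ and ρ ∪ τ ∈ Σ}`. -/
def linkC (S : Finset (Finset α)) (τ : Finset α) : Finset (Finset α) :=
  S.filter fun ρ => Disjoint ρ τ ∧ ρ ∪ τ ∈ S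

/-- The lexicographically smallest (with respect to the linear order `w`, encoded as a
duplicate-free list) facet of the complex `S`, computed greedily along `w`. -/
def lexMinFacet (w : List α) (S : Finset (Finset α)) : Finset α :=
  w.foldl (fun τ a => if insert a τ ∈ S then insert a τ else τ) ∅

/-- The contraction `Σ/A`: the link in `Σ` of the lexicographically smallest facet of the
restriction `Σ|A`. -/
def contractC (w : List α) (S : Finset (Finset α)) (A : Finset α) : Finset (Finset α) :=
  linkC S (lexMinFacet w (restrictC S A))

/-- An ordered complex: a linear order `w` on a finite ground set (a duplicate-free list)
together with a simplicial complex whose faces are subsets of the ground set. -/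
def IsOrderedComplex (w : List α) (S : Finset (Finset α)) : Prop :=
  w.Nodup ∧ (∀ σ ∈ S, σ ⊆ w.toFinset) ∧ IsComplex S

/-- The join of two complexes: `{σ₁ ∪ σ₂ : σ₁ ∈ Σ₁, σ₂ ∈ Σ₂}`. -/
def joinC (S₁ S₂ : Finset (Finset α)) : Finset (Finset α) :=
  (S₁ ×ˢ S₂).image fun p => p.1 ∪ p.2

/-- `w` is a shuffle of the linear orders `w₁` and `w₂`: a linear order on the union of the
two ground sets restricting to `wᵢ` on each. -/
def IsShuffle (w₁ w₂ w : List α) : Prop :=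
  w.Nodup ∧ w.toFinset = w₁.toFinset ∪ w₂.toFinset ∧
    w.filter (fun a => decide (a ∈ w₁.toFinset)) = w₁ ∧
    w.filter (fun a => decide (a ∈ w₂.toFinset)) = w₂

/-- A Hopf class: a class of pure ordered complexes closed under shuffled joins, and under
restriction and contraction by initial segments (with all such restrictions pure).
Here the initial segment of `w` of length `k` is `(w.take k).toFinset`, the order induced on
it is `w.take k`, and the order induced on its complement is `w.drop k`. -/
def IsHopfClass (Q : Set (List α × Finset (Finset α))) : Prop :=
  (∀ p ∈ Q, IsOrderedComplex p.1 p.2 ∧ IsPure p.2) ∧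
  (∀ p₁ ∈ Q, ∀ p₂ ∈ Q, Disjoint p₁.1.toFinset p₂.1.toFinset →
    ∀ w, IsShuffle p₁.1 p₂.1 w → (w, joinC p₁.2 p₂.2) ∈ Q) ∧
  (∀ p ∈ Q, ∀ k : ℕ,
    IsPure (restrictC p.2 (p.1.take k).toFinset) ∧
    (p.1.take k, restrictC p.2 (p.1.take k).toFinset) ∈ Q) ∧
  (∀ p ∈ Q, ∀ k : ℕ,
    (p.1.drop k, contractC p.1 p.2 (p.1.take k).toFinset) ∈ Q)

/-- Order-decomposability: either `Σ` has exactly one facet, or `Σ` is pure and for every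
nonempty proper initial segment `A` of `w` both `Σ|A` and `Σ/A` are pure and (with their
induced orders) order-decomposable. -/
inductive OrderDecomposable : List α → Finset (Finset α) → Prop
  | unique (w : List α) (S : Finset (Finset α)) (σ : Finset α)
      (hσ : IsFacet S σ) (huniq : ∀ τ, IsFacet S τ → τ = σ) :
      OrderDecomposable w S
  | pure (w : List α) (S : Finset (Finset α)) (hpure : IsPure S)
      (hres_pure : ∀ k : ℕ, 0 < k → k < w.length →
        IsPure (restrictC S (w.take k).toFinset))
      (hcon_pure : ∀ k : ℕ, 0 < k → k < w.length →
        IsPure (contractC w S (w.take k).toFinset))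
      (hres : ∀ k : ℕ, 0 < k → k < w.length →
        OrderDecomposable (w.take k) (restrictC S (w.take k).toFinset))
      (hcon : ∀ k : ℕ, 0 < k → k < w.length →
        OrderDecomposable (w.drop k) (contractC w S (w.take k).toFinset)) :
      OrderDecomposable w S


-- basic lemmas
lemma mem_restrictC {S : Finset (Finset α)} {T σ} :
    σ ∈ restrictC S T ↔ σ ∈ S ∧ σ ⊆ T := by simp [restrictC]

lemma mem_linkC {S : Finset (Finset α)} {τ ρ} :
    ρ ∈ linkC S τ ↔ ρ ∈ S ∧ Disjoint ρ τ ∧ ρ ∪ τ ∈ S := by simp [linkC]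

lemma mem_joinC {S₁ S₂ : Finset (Finset α)} {σ} :
    σ ∈ joinC S₁ S₂ ↔ ∃ σ₁ ∈ S₁, ∃ σ₂ ∈ S₂, σ = σ₁ ∪ σ₂ := by
  simp only [joinC, Finset.mem_image, Finset.mem_product, Prod.exists]
  constructor
  · rintro ⟨a, b, ⟨ha, hb⟩, rfl⟩; exact ⟨a, ha, b, hb, rfl⟩
  · rintro ⟨a, ha, b, hb, rfl⟩; exact ⟨a, b, ⟨ha, hb⟩, rfl⟩

lemma isComplex_restrictC {S : Finset (Finset α)} (h : IsComplex S) (T) :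
    IsComplex (restrictC S T) := by
  intro σ hσ τ hτ
  rw [mem_restrictC] at *
  exact ⟨h σ hσ.1 τ hτ, hτ.trans hσ.2⟩

lemma isComplex_linkC {S : Finset (Finset α)} (h : IsComplex S) (τ) :
    IsComplex (linkC S τ) := by
  intro σ hσ ρ hρ
  rw [mem_linkC] at *
  refine ⟨h σ hσ.1 ρ hρ, Finset.disjoint_left.2 fun a ha ha' =>
    Finset.disjoint_left.1 hσ.2.1 (hρ ha) ha', h _ hσ.2.2 _ (Finset.union_subset_union_left hρ)⟩

lemma empty_mem_of_nonempty {S : Finset (Finset α)} (h : IsComplex S) (hne : S.Nonempty) :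
    ∅ ∈ S := by
  obtain ⟨σ, hσ⟩ := hne
  exact h σ hσ ∅ (Finset.empty_subset _)

def gstep (S : Finset (Finset α)) (τ : Finset α) (a : α) : Finset α :=
  if insert a τ ∈ S then insert a τ else τ

lemma subset_gstep (S : Finset (Finset α)) (τ a) : τ ⊆ gstep S τ a := by
  unfold gstep; split
  · exact Finset.subset_insert _ _
  · exact subset_rfl

lemma subset_foldl (S : Finset (Finset α)) :
    ∀ (w : List α) (τ₀ : Finset α), τ₀ ⊆ w.foldl (gstep S) τ₀ := by
  intro w
  induction w with
  | nil => intro τ₀; simp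
  | cons a w ih => intro τ₀; exact (subset_gstep S τ₀ a).trans (ih _)

lemma foldl_mem (S : Finset (Finset α)) :
    ∀ (w : List α) (τ₀ : Finset α), τ₀ ∈ S → w.foldl (gstep S) τ₀ ∈ S := by
  intro w
  induction w with
  | nil => intro τ₀ h; simpa
  | cons a w ih =>
    intro τ₀ h
    refine ih _ ?_
    unfold gstep; split
    · assumption
    · exact h

lemma foldl_maximal {S : Finset (Finset α)} (hS : IsComplex S) {ρ : Finset α} (hρ : ρ ∈ S) :
    ∀ (w : List α) (τ₀ : Finset α), w.foldl (gstep S) τ₀ ⊆ ρ →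
      ∀ a ∈ w, a ∈ ρ → a ∈ w.foldl (gstep S) τ₀ := by
  intro w
  induction w with
  | nil => intro τ₀ _ a ha; simp at ha
  | cons b w ih =>
    intro τ₀ hsub a ha haρ
    simp only [List.foldl_cons] at hsub ⊢
    rcases List.mem_cons.1 ha with rfl | ha'
    · have hb : a ∈ gstep S τ₀ a := by
        unfold gstep; split
        · exact Finset.mem_insert_self _ _
        · exfalso
          have h1 : τ₀ ⊆ ρ := ((subset_gstep S τ₀ a).trans (subset_foldl S w _)).trans hsub
          have : insert a τ₀ ⊆ ρ := Finset.insert_subset haρ h1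
          exact ‹insert a τ₀ ∉ S› (hS ρ hρ _ this)
      exact subset_foldl S w _ hb
    · exact ih _ hsub a ha' haρ

lemma lexMinFacet_isFacet {w : List α} {S : Finset (Finset α)} (hS : IsComplex S)
    (hg : ∀ σ ∈ S, σ ⊆ w.toFinset) (hne : S.Nonempty) :
    IsFacet S (lexMinFacet w S) := by
  have hmem : lexMinFacet w S ∈ S := foldl_mem S w ∅ (empty_mem_of_nonempty hS hne)
  refine ⟨hmem, fun ρ hρ hsub => ?_⟩
  refine Finset.Subset.antisymm hsub fun a haρ => ?_
  exact foldl_maximal hS hρ w ∅ hsub a (by simpa using hg ρ hρ haρ) haρ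

lemma lexMinFacet_mem {w : List α} {S : Finset (Finset α)} (h : ∅ ∈ S) :
    lexMinFacet w S ∈ S := foldl_mem S w ∅ h

lemma foldl_no_insert {S : Finset (Finset α)} (h : ∀ τ a, insert a τ ∉ S) :
    ∀ (w : List α) (τ₀ : Finset α), w.foldl (gstep S) τ₀ = τ₀ := by
  intro w
  induction w with
  | nil => intro; simp
  | cons a w ih =>
    intro τ₀
    simp only [List.foldl_cons]
    rw [show gstep S τ₀ a = τ₀ from by unfold gstep; rw [if_neg (h τ₀ a)], ih]

lemma lexMinFacet_subsingleton {w : List α} {S : Finset (Finset α)}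
    (h : ∀ ρ ∈ S, ρ = ∅) : lexMinFacet w S = ∅ := by
  refine foldl_no_insert (fun τ a hin => ?_) w ∅
  exact Finset.insert_ne_empty a τ (h _ hin)

-- powerset
lemma foldl_powerset (σ : Finset α) :
    ∀ (w : List α) (τ₀ : Finset α), τ₀ ⊆ σ →
      w.foldl (gstep σ.powerset) τ₀ = τ₀ ∪ (σ ∩ w.toFinset) := by
  intro w
  induction w with
  | nil => intro τ₀ h; simp
  | cons a w ih =>
    intro τ₀ h
    simp only [List.foldl_cons, List.toFinset_cons]
    by_cases ha : a ∈ σ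
    · have : gstep σ.powerset τ₀ a = insert a τ₀ := by
        unfold gstep; rw [if_pos (by simpa using Finset.insert_subset ha h)]
      rw [this, ih _ (by simpa using Finset.insert_subset ha h)]
      ext x
      simp only [Finset.mem_union, Finset.mem_insert, Finset.mem_inter, List.mem_toFinset]
      constructor
      · rintro ((rfl | h1) | ⟨h1, h2⟩)
        · exact Or.inr ⟨ha, Or.inl rfl⟩
        · exact Or.inl h1
        · exact Or.inr ⟨h1, Or.inr h2⟩
      · rintro (h1 | ⟨h1, rfl | h2⟩)
        · exact Or.inl (Or.inr h1)
        · exact Or.inl (Or.inl rfl)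
        · exact Or.inr ⟨h1, h2⟩
    · have : gstep σ.powerset τ₀ a = τ₀ := by
        unfold gstep
        rw [if_neg]
        simp only [Finset.mem_powerset]
        intro hc
        exact ha (hc (Finset.mem_insert_self _ _))
      rw [this, ih _ h]
      congr 1
      ext x
      simp only [Finset.mem_inter, List.mem_toFinset, Finset.mem_insert]
      constructor
      · rintro ⟨h1, h2⟩; exact ⟨h1, Or.inr h2⟩
      · rintro ⟨h1, rfl | h2⟩
        · exact absurd h1 ha
        · exact ⟨h1, h2⟩

lemma lexMinFacet_powerset {w : List α} {σ : Finset α} (h : σ ⊆ w.toFinset) :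
    lexMinFacet w σ.powerset = σ := by
  show List.foldl (gstep σ.powerset) ∅ w = σ
  rw [foldl_powerset σ w ∅ (Finset.empty_subset _)]
  rw [Finset.empty_union, Finset.inter_eq_left.2 h]


-- purity from OD
lemma od_pure {w : List α} {S : Finset (Finset α)} (h : OrderDecomposable w S) : IsPure S := by
  cases h with
  | unique w S σ hσ huniq => intro σ' τ' h1 h2; rw [huniq σ' h1, huniq τ' h2]
  | pure w S hpure _ _ _ _ => exact hpure

-- powerset facts
lemma isComplex_powerset (σ : Finset α) : IsComplex σ.powerset := by
  intro τ hτ ρ hρ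
  simp only [Finset.mem_powerset] at *
  exact hρ.trans hτ

lemma isFacet_powerset (σ : Finset α) : IsFacet σ.powerset σ :=
  ⟨Finset.mem_powerset_self σ, fun τ hτ h => Finset.Subset.antisymm h (Finset.mem_powerset.1 hτ)⟩

lemma facet_powerset_eq {σ τ : Finset α} (h : IsFacet σ.powerset τ) : τ = σ :=
  h.2 σ (Finset.mem_powerset_self σ) (Finset.mem_powerset.1 h.1)

lemma od_powerset (w : List α) (σ : Finset α) : OrderDecomposable w σ.powerset :=
  OrderDecomposable.unique w _ σ (isFacet_powerset σ) (fun τ h => facet_powerset_eq h)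

lemma restrictC_powerset (σ T : Finset α) :
    restrictC σ.powerset T = (σ ∩ T).powerset := by
  ext ρ
  simp only [mem_restrictC, Finset.mem_powerset, Finset.subset_inter_iff]

lemma linkC_powerset {σ τ : Finset α} (h : τ ⊆ σ) :
    linkC σ.powerset τ = (σ \ τ).powerset := by
  ext ρ
  simp only [mem_linkC, Finset.mem_powerset, Finset.subset_sdiff, Finset.union_subset_iff]
  constructor
  · rintro ⟨h1, h2, _⟩; exact ⟨h1, h2⟩
  · rintro ⟨h1, h2⟩; exact ⟨h1, h2, h1, h⟩

-- unique facet ⇒ powerset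
lemma eq_powerset_of_unique_facet {S : Finset (Finset α)} {σ : Finset α}
    (hS : IsComplex S) (hσ : IsFacet S σ) (huniq : ∀ τ, IsFacet S τ → τ = σ) :
    S = σ.powerset := by
  ext τ
  simp only [Finset.mem_powerset]
  constructor
  · intro hτ
    -- take a maximal element of S containing τ
    have hne : (S.filter (τ ⊆ ·)).Nonempty := ⟨τ, by simp [hτ]⟩
    obtain ⟨μ, hμ, hmax⟩ : ∃ m ∈ S.filter (τ ⊆ ·), ∀ x ∈ S.filter (τ ⊆ ·), ¬ m < x := by
      obtain ⟨m, hm⟩ := Finset.exists_maximal hne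
      exact ⟨m, hm.1, fun x hx hlt => absurd (hm.2 hx hlt.le) hlt.not_ge⟩
    simp only [Finset.mem_filter] at hμ
    have hfacet : IsFacet S μ := by
      refine ⟨hμ.1, fun ν hν hsub => ?_⟩
      by_contra hne'
      exact hmax ν (by simp [hν, hμ.2.trans hsub]) (lt_of_le_of_ne hsub hne')
    exact (huniq μ hfacet) ▸ hμ.2
  · intro hτ
    exact hS σ hσ.1 τ hτ

-- empty complex is order decomposable
lemma restrictC_empty (T : Finset α) : restrictC (∅ : Finset (Finset α)) T = ∅ := rfl

lemma contractC_empty (w : List α) (A : Finset α) :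
    contractC w (∅ : Finset (Finset α)) A = ∅ := rfl

lemma od_empty_aux : ∀ (n : ℕ) (w : List α), w.length ≤ n →
    OrderDecomposable w (∅ : Finset (Finset α)) := by
  intro n
  induction n with
  | zero =>
    intro w hw
    refine OrderDecomposable.pure w ∅ (fun σ τ h _ => absurd h.1 (Finset.notMem_empty _))
      (fun k hk hk' => absurd hk (by omega)) (fun k hk hk' => absurd hk (by omega))
      (fun k hk hk' => absurd hk (by omega)) (fun k hk hk' => absurd hk (by omega))
  | succ n ih =>
  intro w hw
  refine OrderDecomposable.pure w ∅ (fun σ τ h _ => absurd h.1 (Finset.notMem_empty _))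
    (fun k _ _ => ?_) (fun k _ _ => ?_) (fun k hk hk' => ?_) (fun k hk hk' => ?_)
  · rw [restrictC_empty]; exact fun σ τ h _ => absurd h.1 (Finset.notMem_empty _)
  · rw [contractC_empty]; exact fun σ τ h _ => absurd h.1 (Finset.notMem_empty _)
  · rw [restrictC_empty]
    exact ih _ (by simp; omega)
  · rw [contractC_empty]
    exact ih _ (by simp; omega)

lemma od_empty (w : List α) : OrderDecomposable w (∅ : Finset (Finset α)) :=
  od_empty_aux w.length w le_rfl

lemma od_singleton_empty (w : List α) : OrderDecomposable w ({∅} : Finset (Finset α)) := by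
  refine OrderDecomposable.unique w _ ∅ ⟨Finset.mem_singleton_self _, fun τ hτ _ => ?_⟩
    (fun τ hτ => Finset.mem_singleton.1 hτ.1)
  exact (Finset.mem_singleton.1 hτ).symm

-- ordered complex preservation
lemma isOrdered_restrict {w : List α} {S : Finset (Finset α)} (h : IsOrderedComplex w S) (k : ℕ) :
    IsOrderedComplex (w.take k) (restrictC S (w.take k).toFinset) :=
  ⟨(List.take_sublist k w).nodup h.1, fun σ hσ => (mem_restrictC.1 hσ).2,
    isComplex_restrictC h.2.2 _⟩

lemma toFinset_take_subset (w : List α) (k : ℕ) : (w.take k).toFinset ⊆ w.toFinset := by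
  intro a ha
  simp only [List.mem_toFinset] at *
  exact (List.take_sublist k w).mem ha

lemma toFinset_drop {w : List α} (h : w.Nodup) (k : ℕ) :
    (w.drop k).toFinset = w.toFinset \ (w.take k).toFinset := by
  have hw : w.take k ++ w.drop k = w := List.take_append_drop k w
  have hnd : (w.take k ++ w.drop k).Nodup := by rw [hw]; exact h
  have hdisj := (List.nodup_append.1 hnd).2.2
  ext a
  simp only [List.mem_toFinset, Finset.mem_sdiff]
  constructor
  · intro ha
    refine ⟨?_, fun hc => hdisj _ hc _ ha rfl⟩
    rw [← hw]; exact List.mem_append_right _ ha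
  · rintro ⟨ha, hna⟩
    rcases List.mem_append.1 (by rw [hw]; exact ha : a ∈ w.take k ++ w.drop k) with h1 | h1
    · exact absurd h1 hna
    · exact h1

lemma restrictC_ground {w : List α} {S : Finset (Finset α)} (h : IsOrderedComplex w S) :
    restrictC S w.toFinset = S := by
  ext σ
  rw [mem_restrictC]
  exact ⟨fun h' => h'.1, fun h' => ⟨h', h.2.1 σ h'⟩⟩

lemma restrictC_bot {S : Finset (Finset α)} (hS : IsComplex S) :
    restrictC S (∅ : Finset α) = if ∅ ∈ S then {∅} else ∅ := by
  split
  · ext σ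
    simp only [mem_restrictC, Finset.subset_empty, Finset.mem_singleton]
    constructor
    · rintro ⟨_, rfl⟩; rfl
    · rintro rfl; exact ⟨‹∅ ∈ S›, rfl⟩
  · ext σ
    simp only [mem_restrictC, Finset.subset_empty, Finset.notMem_empty, iff_false]
    rintro ⟨h1, rfl⟩
    exact ‹∅ ∉ S› h1

lemma contract_disjoint {w : List α} {S : Finset (Finset α)} (h : IsOrderedComplex w S)
    {k : ℕ} {ρ : Finset α} (hρ : ρ ∈ contractC w S (w.take k).toFinset) :
    Disjoint ρ (w.take k).toFinset := by
  rcases S.eq_empty_or_nonempty with rfl | hne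
  · rw [contractC_empty] at hρ; exact absurd hρ (Finset.notMem_empty _)
  set A := (w.take k).toFinset with hA
  have hAg : A ⊆ w.toFinset := toFinset_take_subset w k
  have hRc := isComplex_restrictC h.2.2 A
  have hRg : ∀ σ ∈ restrictC S A, σ ⊆ w.toFinset := fun σ hσ => ((mem_restrictC.1 hσ).2).trans hAg
  have hRne : (restrictC S A).Nonempty :=
    ⟨∅, mem_restrictC.2 ⟨empty_mem_of_nonempty h.2.2 hne, Finset.empty_subset _⟩⟩
  have hfacet := lexMinFacet_isFacet hRc hRg hRne
  set τ := lexMinFacet w (restrictC S A) with hτ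
  rw [contractC, mem_linkC] at hρ
  rw [Finset.disjoint_left]
  intro x hx hxA
  have hτA : τ ⊆ A := (mem_restrictC.1 hfacet.1).2
  have h1 : insert x τ ∈ S := by
    refine h.2.2 _ hρ.2.2 _ ?_
    exact Finset.insert_subset (Finset.mem_union_left _ hx) Finset.subset_union_right
  have h2 : insert x τ ∈ restrictC S A := mem_restrictC.2 ⟨h1, Finset.insert_subset hxA hτA⟩
  have h3 := hfacet.2 _ h2 (Finset.subset_insert _ _)
  have h4 : x ∈ τ := by rw [h3]; exact Finset.mem_insert_self x τ
  exact Finset.disjoint_left.1 hρ.2.1 hx h4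

lemma isOrdered_contract {w : List α} {S : Finset (Finset α)} (h : IsOrderedComplex w S) (k : ℕ) :
    IsOrderedComplex (w.drop k) (contractC w S (w.take k).toFinset) := by
  refine ⟨(List.drop_sublist k w).nodup h.1, fun ρ hρ => ?_, isComplex_linkC h.2.2 _⟩
  have h1 : ρ ∈ S := (mem_linkC.1 hρ).1
  have h2 := contract_disjoint h hρ
  rw [toFinset_drop h.1]
  exact Finset.subset_sdiff.2 ⟨h.2.1 ρ h1, h2⟩

-- Lemma R
theorem od_restrict {w : List α} {S : Finset (Finset α)} (h : IsOrderedComplex w S)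
    (hod : OrderDecomposable w S) (k : ℕ) :
    OrderDecomposable (w.take k) (restrictC S (w.take k).toFinset) := by
  cases hod with
  | unique _ _ σ hσ huniq =>
    rw [eq_powerset_of_unique_facet h.2.2 hσ huniq, restrictC_powerset]
    exact od_powerset _ _
  | pure _ _ hpure hrp hcp hres hcon =>
    rcases Nat.eq_zero_or_pos k with rfl | hk
    · simp only [List.take_zero, List.toFinset_nil]
      rw [restrictC_bot h.2.2]
      split
      · exact od_singleton_empty _
      · exact od_empty _
    rcases Nat.lt_or_ge k w.length with hk' | hk'
    · exact hres k hk hk'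
    · rw [List.take_of_length_le hk', restrictC_ground h]
      exact OrderDecomposable.pure w S hpure hrp hcp hres hcon

-- Lemma C
theorem od_contract {w : List α} {S : Finset (Finset α)} (h : IsOrderedComplex w S)
    (hod : OrderDecomposable w S) (k : ℕ) :
    OrderDecomposable (w.drop k) (contractC w S (w.take k).toFinset) := by
  cases hod with
  | unique _ _ σ hσ huniq =>
    have hP := eq_powerset_of_unique_facet h.2.2 hσ huniq
    have hg : σ ⊆ w.toFinset := h.2.1 σ hσ.1
    rw [hP, contractC, restrictC_powerset,
      lexMinFacet_powerset (Finset.inter_subset_left.trans hg),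
      linkC_powerset Finset.inter_subset_left]
    exact od_powerset _ _
  | pure _ _ hpure hrp hcp hres hcon =>
    rcases Nat.eq_zero_or_pos k with rfl | hk
    · have h1 : lexMinFacet w (restrictC S (w.take 0).toFinset) = ∅ := by
        refine lexMinFacet_subsingleton fun ρ hρ => ?_
        have := (mem_restrictC.1 hρ).2
        simpa [Finset.subset_empty] using this
      have h2 : contractC w S (w.take 0).toFinset = S := by
        rw [contractC, h1]
        ext ρ
        simp [mem_linkC]
      rw [h2, List.drop_zero]
      exact OrderDecomposable.pure w S hpure hrp hcp hres hcon
    rcases Nat.lt_or_ge k w.length with hk' | hk'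
    · exact hcon k hk hk'
    · rw [List.take_of_length_le hk']
      rcases S.eq_empty_or_nonempty with rfl | hne
      · rw [contractC_empty]; exact od_empty _
      have hfacet := lexMinFacet_isFacet h.2.2 h.2.1 hne
      rw [contractC, restrictC_ground h]
      have hlink : linkC S (lexMinFacet w S) = {∅} := by
        ext ρ
        simp only [mem_linkC, Finset.mem_singleton]
        constructor
        · rintro ⟨h1, h2, h3⟩
          have h4 := hfacet.2 _ h3 Finset.subset_union_right
          have h5 : ρ ⊆ lexMinFacet w S := by rw [h4]; exact Finset.subset_union_left
          rw [Finset.eq_empty_iff_forall_notMem]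
          intro x hx
          exact Finset.disjoint_left.1 h2 hx (h5 hx)
        · rintro rfl
          exact ⟨empty_mem_of_nonempty h.2.2 hne, Finset.disjoint_empty_left _,
            by rw [Finset.empty_union]; exact hfacet.1⟩
      rw [hlink]
      exact od_singleton_empty _

-- join helpers
lemma union_inter_left {σ₁ σ₂ I₁ I₂ : Finset α} (hdis : Disjoint I₁ I₂)
    (h1 : σ₁ ⊆ I₁) (h2 : σ₂ ⊆ I₂) : (σ₁ ∪ σ₂) ∩ I₁ = σ₁ := by
  rw [Finset.union_inter_distrib_right, Finset.inter_eq_left.2 h1,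
    Finset.disjoint_iff_inter_eq_empty.1 (Finset.disjoint_of_subset_left h2 hdis.symm),
    Finset.union_empty]

lemma union_inter_right {σ₁ σ₂ I₁ I₂ : Finset α} (hdis : Disjoint I₁ I₂)
    (h1 : σ₁ ⊆ I₁) (h2 : σ₂ ⊆ I₂) : (σ₁ ∪ σ₂) ∩ I₂ = σ₂ := by
  rw [Finset.union_comm]
  exact union_inter_left hdis.symm h2 h1

lemma self_eq_inter_union {σ I₁ I₂ : Finset α} (h : σ ⊆ I₁ ∪ I₂) :
    σ = (σ ∩ I₁) ∪ (σ ∩ I₂) := by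
  rw [← Finset.inter_union_distrib_left, Finset.inter_eq_left.2 h]

lemma joinC_empty_left (S : Finset (Finset α)) : joinC ∅ S = ∅ := by simp [joinC]

lemma joinC_empty_right (S : Finset (Finset α)) : joinC S ∅ = ∅ := by simp [joinC]

-- intersection characterization of membership in a join
lemma mem_joinC_iff {I₁ I₂ : Finset α} {S₁ S₂ : Finset (Finset α)} (hdis : Disjoint I₁ I₂)
    (hg1 : ∀ σ ∈ S₁, σ ⊆ I₁) (hg2 : ∀ σ ∈ S₂, σ ⊆ I₂) {σ : Finset α} :
    σ ∈ joinC S₁ S₂ ↔ σ ⊆ I₁ ∪ I₂ ∧ σ ∩ I₁ ∈ S₁ ∧ σ ∩ I₂ ∈ S₂ := by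
  rw [mem_joinC]
  constructor
  · rintro ⟨σ₁, h1, σ₂, h2, rfl⟩
    rw [union_inter_left hdis (hg1 _ h1) (hg2 _ h2),
      union_inter_right hdis (hg1 _ h1) (hg2 _ h2)]
    exact ⟨Finset.union_subset_union (hg1 _ h1) (hg2 _ h2), h1, h2⟩
  · rintro ⟨hsub, h1, h2⟩
    exact ⟨σ ∩ I₁, h1, σ ∩ I₂, h2, self_eq_inter_union hsub⟩

lemma isComplex_joinC {I₁ I₂ : Finset α} {S₁ S₂ : Finset (Finset α)} (hdis : Disjoint I₁ I₂)
    (hg1 : ∀ σ ∈ S₁, σ ⊆ I₁) (hg2 : ∀ σ ∈ S₂, σ ⊆ I₂)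
    (hc1 : IsComplex S₁) (hc2 : IsComplex S₂) : IsComplex (joinC S₁ S₂) := by
  intro σ hσ τ hτ
  rw [mem_joinC_iff hdis hg1 hg2] at *
  exact ⟨hτ.trans hσ.1, hc1 _ hσ.2.1 _ (Finset.inter_subset_inter hτ subset_rfl),
    hc2 _ hσ.2.2 _ (Finset.inter_subset_inter hτ subset_rfl)⟩

-- restriction of a join
lemma restrictC_joinC {I₁ I₂ : Finset α} {S₁ S₂ : Finset (Finset α)}
    (hg1 : ∀ σ ∈ S₁, σ ⊆ I₁) (hg2 : ∀ σ ∈ S₂, σ ⊆ I₂) (T : Finset α) :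
    restrictC (joinC S₁ S₂) T = joinC (restrictC S₁ (T ∩ I₁)) (restrictC S₂ (T ∩ I₂)) := by
  ext σ
  rw [mem_restrictC, mem_joinC, mem_joinC]
  constructor
  · rintro ⟨⟨σ₁, h1, σ₂, h2, rfl⟩, hsub⟩
    refine ⟨σ₁, mem_restrictC.2 ⟨h1, Finset.subset_inter
        (Finset.subset_union_left.trans hsub) (hg1 _ h1)⟩,
      σ₂, mem_restrictC.2 ⟨h2, Finset.subset_inter
        (Finset.subset_union_right.trans hsub) (hg2 _ h2)⟩, rfl⟩
  · rintro ⟨σ₁, h1, σ₂, h2, rfl⟩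
    rw [mem_restrictC] at h1 h2
    exact ⟨⟨σ₁, h1.1, σ₂, h2.1, rfl⟩,
      Finset.union_subset (h1.2.trans Finset.inter_subset_left)
        (h2.2.trans Finset.inter_subset_left)⟩

-- link of a join
lemma linkC_joinC {I₁ I₂ : Finset α} {S₁ S₂ : Finset (Finset α)} (hdis : Disjoint I₁ I₂)
    (hg1 : ∀ σ ∈ S₁, σ ⊆ I₁) (hg2 : ∀ σ ∈ S₂, σ ⊆ I₂) {τ₁ τ₂ : Finset α}
    (ht1 : τ₁ ⊆ I₁) (ht2 : τ₂ ⊆ I₂) :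
    linkC (joinC S₁ S₂) (τ₁ ∪ τ₂) = joinC (linkC S₁ τ₁) (linkC S₂ τ₂) := by
  have hgl1 : ∀ σ ∈ linkC S₁ τ₁, σ ⊆ I₁ := fun σ hσ => hg1 _ (mem_linkC.1 hσ).1
  have hgl2 : ∀ σ ∈ linkC S₂ τ₂, σ ⊆ I₂ := fun σ hσ => hg2 _ (mem_linkC.1 hσ).1
  ext ρ
  rw [mem_linkC, mem_joinC_iff hdis hg1 hg2, mem_joinC_iff hdis hg1 hg2,
    mem_joinC_iff hdis hgl1 hgl2, mem_linkC, mem_linkC]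
  constructor
  · rintro ⟨⟨hsub, hm1, hm2⟩, hdisj, hsub2, hu1, hu2⟩
    have e1 : (ρ ∪ (τ₁ ∪ τ₂)) ∩ I₁ = (ρ ∩ I₁) ∪ τ₁ := by
      rw [Finset.union_inter_distrib_right, Finset.union_inter_distrib_right,
        Finset.inter_eq_left.2 ht1,
        Finset.disjoint_iff_inter_eq_empty.1 (Finset.disjoint_of_subset_left ht2 hdis.symm),
        Finset.union_empty]
    have e2 : (ρ ∪ (τ₁ ∪ τ₂)) ∩ I₂ = (ρ ∩ I₂) ∪ τ₂ := by
      rw [Finset.union_inter_distrib_right, Finset.union_inter_distrib_right,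
        Finset.inter_eq_left.2 ht2,
        Finset.disjoint_iff_inter_eq_empty.1 (Finset.disjoint_of_subset_left ht1 hdis),
        Finset.empty_union]
    rw [e1] at hu1; rw [e2] at hu2
    refine ⟨hsub, ⟨hm1, ?_, hu1⟩, hm2, ?_, hu2⟩
    · exact hdisj.mono Finset.inter_subset_left Finset.subset_union_left
    · exact hdisj.mono Finset.inter_subset_left Finset.subset_union_right
  · rintro ⟨hsub, ⟨hm1, hd1, hu1⟩, hm2, hd2, hu2⟩
    refine ⟨⟨hsub, hm1, hm2⟩, ?_, ?_, ?_, ?_⟩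
    · rw [Finset.disjoint_left]
      intro x hx hxt
      rcases Finset.mem_union.1 (hsub hx) with hI | hI
      · rcases Finset.mem_union.1 hxt with ht | ht
        · exact Finset.disjoint_left.1 hd1 (Finset.mem_inter.2 ⟨hx, hI⟩) ht
        · exact Finset.disjoint_left.1 hdis hI (ht2 ht)
      · rcases Finset.mem_union.1 hxt with ht | ht
        · exact Finset.disjoint_left.1 hdis.symm hI (ht1 ht)
        · exact Finset.disjoint_left.1 hd2 (Finset.mem_inter.2 ⟨hx, hI⟩) ht
    · exact Finset.union_subset hsub
        (Finset.union_subset (ht1.trans Finset.subset_union_left)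
          (ht2.trans Finset.subset_union_right))
    · rw [show (ρ ∪ (τ₁ ∪ τ₂)) ∩ I₁ = (ρ ∩ I₁) ∪ τ₁ from by
        rw [Finset.union_inter_distrib_right, Finset.union_inter_distrib_right,
          Finset.inter_eq_left.2 ht1,
          Finset.disjoint_iff_inter_eq_empty.1 (Finset.disjoint_of_subset_left ht2 hdis.symm),
          Finset.union_empty]]
      exact hu1
    · rw [show (ρ ∪ (τ₁ ∪ τ₂)) ∩ I₂ = (ρ ∩ I₂) ∪ τ₂ from by
        rw [Finset.union_inter_distrib_right, Finset.union_inter_distrib_right,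
          Finset.inter_eq_left.2 ht2,
          Finset.disjoint_iff_inter_eq_empty.1 (Finset.disjoint_of_subset_left ht1 hdis),
          Finset.empty_union]]
      exact hu2

-- facets of a join
lemma isFacet_joinC_inter {I₁ I₂ : Finset α} {S₁ S₂ : Finset (Finset α)} (hdis : Disjoint I₁ I₂)
    (hg1 : ∀ σ ∈ S₁, σ ⊆ I₁) (hg2 : ∀ σ ∈ S₂, σ ⊆ I₂) {σ : Finset α}
    (h : IsFacet (joinC S₁ S₂) σ) : IsFacet S₁ (σ ∩ I₁) ∧ IsFacet S₂ (σ ∩ I₂) := by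
  obtain ⟨hsub, hm1, hm2⟩ := (mem_joinC_iff hdis hg1 hg2).1 h.1
  constructor
  · refine ⟨hm1, fun τ₁ hτ₁ hsub₁ => ?_⟩
    have hJ : τ₁ ∪ (σ ∩ I₂) ∈ joinC S₁ S₂ := mem_joinC.2 ⟨τ₁, hτ₁, _, hm2, rfl⟩
    have hσsub : σ ⊆ τ₁ ∪ (σ ∩ I₂) :=
      (self_eq_inter_union hsub).le.trans (Finset.union_subset_union_left hsub₁)
    have := h.2 _ hJ hσsub
    rw [this, union_inter_left hdis (hg1 _ hτ₁) Finset.inter_subset_right]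
  · refine ⟨hm2, fun τ₂ hτ₂ hsub₂ => ?_⟩
    have hJ : (σ ∩ I₁) ∪ τ₂ ∈ joinC S₁ S₂ := mem_joinC.2 ⟨_, hm1, τ₂, hτ₂, rfl⟩
    have hσsub : σ ⊆ (σ ∩ I₁) ∪ τ₂ :=
      (self_eq_inter_union hsub).le.trans (Finset.union_subset_union_right hsub₂)
    have := h.2 _ hJ hσsub
    rw [this, union_inter_right hdis Finset.inter_subset_right (hg2 _ hτ₂)]

lemma isPure_joinC {I₁ I₂ : Finset α} {S₁ S₂ : Finset (Finset α)} (hdis : Disjoint I₁ I₂)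
    (hg1 : ∀ σ ∈ S₁, σ ⊆ I₁) (hg2 : ∀ σ ∈ S₂, σ ⊆ I₂)
    (hp1 : IsPure S₁) (hp2 : IsPure S₂) : IsPure (joinC S₁ S₂) := by
  intro σ τ hσ hτ
  obtain ⟨hσ1, hσ2⟩ := isFacet_joinC_inter hdis hg1 hg2 hσ
  obtain ⟨hτ1, hτ2⟩ := isFacet_joinC_inter hdis hg1 hg2 hτ
  have hσs := ((mem_joinC_iff hdis hg1 hg2).1 hσ.1).1
  have hτs := ((mem_joinC_iff hdis hg1 hg2).1 hτ.1).1
  have hd : ∀ ρ : Finset α, Disjoint (ρ ∩ I₁) (ρ ∩ I₂) := fun ρ =>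
    hdis.mono Finset.inter_subset_right Finset.inter_subset_right
  rw [self_eq_inter_union hσs, self_eq_inter_union hτs,
    Finset.card_union_of_disjoint (hd σ), Finset.card_union_of_disjoint (hd τ),
    hp1 _ _ hσ1 hτ1, hp2 _ _ hσ2 hτ2]

-- greedy on a join factors
lemma foldl_joinC {I₁ I₂ : Finset α} {R₁ R₂ : Finset (Finset α)} (hdis : Disjoint I₁ I₂)
    (hg1 : ∀ σ ∈ R₁, σ ⊆ I₁) (hg2 : ∀ σ ∈ R₂, σ ⊆ I₂) :
    ∀ (w : List α) (τ₁ τ₂ : Finset α), τ₁ ⊆ I₁ → τ₂ ⊆ I₂ → τ₁ ∈ R₁ → τ₂ ∈ R₂ →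
      w.foldl (gstep (joinC R₁ R₂)) (τ₁ ∪ τ₂) =
        (w.filter (fun a => decide (a ∈ I₁))).foldl (gstep R₁) τ₁ ∪
        (w.filter (fun a => decide (a ∈ I₂))).foldl (gstep R₂) τ₂ := by
  intro w
  induction w with
  | nil => intro τ₁ τ₂ _ _ _ _; simp
  | cons a w ih =>
    intro τ₁ τ₂ h1 h2 m1 m2
    by_cases ha1 : a ∈ I₁
    · have ha2 : a ∉ I₂ := Finset.disjoint_left.1 hdis ha1
      rw [List.filter_cons_of_pos (by simpa using ha1),
        List.filter_cons_of_neg (by simpa using ha2)]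
      simp only [List.foldl_cons]
      by_cases hins : insert a τ₁ ∈ R₁
      · have hJ : insert a (τ₁ ∪ τ₂) ∈ joinC R₁ R₂ := by
          rw [← Finset.insert_union]
          exact mem_joinC.2 ⟨_, hins, _, m2, rfl⟩
        rw [show gstep (joinC R₁ R₂) (τ₁ ∪ τ₂) a = insert a (τ₁ ∪ τ₂) from if_pos hJ,
          show gstep R₁ τ₁ a = insert a τ₁ from if_pos hins, ← Finset.insert_union]
        exact ih (insert a τ₁) τ₂ (Finset.insert_subset ha1 h1) h2 hins m2
      · have hJ : insert a (τ₁ ∪ τ₂) ∉ joinC R₁ R₂ := by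
          intro hc
          rcases mem_joinC.1 hc with ⟨σ₁, hσ₁, σ₂, hσ₂, heq⟩
          have e1 : (insert a (τ₁ ∪ τ₂)) ∩ I₁ = insert a τ₁ := by
            rw [← Finset.insert_union]
            exact union_inter_left hdis (Finset.insert_subset ha1 h1) h2
          have e2 : (σ₁ ∪ σ₂) ∩ I₁ = σ₁ := union_inter_left hdis (hg1 _ hσ₁) (hg2 _ hσ₂)
          rw [heq, e2] at e1
          exact hins (e1 ▸ hσ₁)
        rw [show gstep (joinC R₁ R₂) (τ₁ ∪ τ₂) a = τ₁ ∪ τ₂ from if_neg hJ,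
          show gstep R₁ τ₁ a = τ₁ from if_neg hins]
        exact ih τ₁ τ₂ h1 h2 m1 m2
    · by_cases ha2 : a ∈ I₂
      · rw [List.filter_cons_of_neg (by simpa using ha1),
          List.filter_cons_of_pos (by simpa using ha2)]
        simp only [List.foldl_cons]
        by_cases hins : insert a τ₂ ∈ R₂
        · have hJ : insert a (τ₁ ∪ τ₂) ∈ joinC R₁ R₂ := by
            rw [← Finset.union_insert]
            exact mem_joinC.2 ⟨_, m1, _, hins, rfl⟩
          rw [show gstep (joinC R₁ R₂) (τ₁ ∪ τ₂) a = insert a (τ₁ ∪ τ₂) from if_pos hJ,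
            show gstep R₂ τ₂ a = insert a τ₂ from if_pos hins, ← Finset.union_insert]
          exact ih τ₁ (insert a τ₂) h1 (Finset.insert_subset ha2 h2) m1 hins
        · have hJ : insert a (τ₁ ∪ τ₂) ∉ joinC R₁ R₂ := by
            intro hc
            rcases mem_joinC.1 hc with ⟨σ₁, hσ₁, σ₂, hσ₂, heq⟩
            have e1 : (insert a (τ₁ ∪ τ₂)) ∩ I₂ = insert a τ₂ := by
              rw [← Finset.union_insert]
              exact union_inter_right hdis h1 (Finset.insert_subset ha2 h2)
            have e2 : (σ₁ ∪ σ₂) ∩ I₂ = σ₂ := union_inter_right hdis (hg1 _ hσ₁) (hg2 _ hσ₂)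
            rw [heq, e2] at e1
            exact hins (e1 ▸ hσ₂)
          rw [show gstep (joinC R₁ R₂) (τ₁ ∪ τ₂) a = τ₁ ∪ τ₂ from if_neg hJ,
            show gstep R₂ τ₂ a = τ₂ from if_neg hins]
          exact ih τ₁ τ₂ h1 h2 m1 m2
      · rw [List.filter_cons_of_neg (by simpa using ha1),
          List.filter_cons_of_neg (by simpa using ha2)]
        simp only [List.foldl_cons]
        have hJ : insert a (τ₁ ∪ τ₂) ∉ joinC R₁ R₂ := by
          intro hc
          rcases mem_joinC.1 hc with ⟨σ₁, hσ₁, σ₂, hσ₂, heq⟩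
          have : a ∈ σ₁ ∪ σ₂ := heq ▸ Finset.mem_insert_self a _
          rcases Finset.mem_union.1 this with h | h
          · exact ha1 (hg1 _ hσ₁ h)
          · exact ha2 (hg2 _ hσ₂ h)
        rw [show gstep (joinC R₁ R₂) (τ₁ ∪ τ₂) a = τ₁ ∪ τ₂ from if_neg hJ]
        exact ih τ₁ τ₂ h1 h2 m1 m2

lemma lexMinFacet_joinC {I₁ I₂ : Finset α} {R₁ R₂ : Finset (Finset α)} (hdis : Disjoint I₁ I₂)
    (hg1 : ∀ σ ∈ R₁, σ ⊆ I₁) (hg2 : ∀ σ ∈ R₂, σ ⊆ I₂)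
    (he1 : ∅ ∈ R₁) (he2 : ∅ ∈ R₂) (w : List α) :
    lexMinFacet w (joinC R₁ R₂) =
      lexMinFacet (w.filter (fun a => decide (a ∈ I₁))) R₁ ∪
      lexMinFacet (w.filter (fun a => decide (a ∈ I₂))) R₂ := by
  show w.foldl (gstep (joinC R₁ R₂)) (∅ ∪ ∅) = _
  rw [foldl_joinC hdis hg1 hg2 w ∅ ∅ (Finset.empty_subset _) (Finset.empty_subset _) he1 he2]
  rfl

-- shuffle lemmas
lemma toFinset_drop_subset (w : List α) (k : ℕ) : (w.drop k).toFinset ⊆ w.toFinset := by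
  intro a ha
  simp only [List.mem_toFinset] at *
  exact (List.drop_sublist k w).mem ha

lemma shuffle_filter_take {w₁ w₂ w : List α} (hsh : IsShuffle w₁ w₂ w) (k : ℕ) :
    (w.take k).filter (fun a => decide (a ∈ w₁.toFinset)) =
      w₁.take ((w.take k).filter (fun a => decide (a ∈ w₁.toFinset))).length := by
  have h : (w.take k).filter (fun a => decide (a ∈ w₁.toFinset)) ++
      (w.drop k).filter (fun a => decide (a ∈ w₁.toFinset)) = w₁ := by
    rw [← List.filter_append, List.take_append_drop]
    exact hsh.2.2.1
  have h2 := List.take_left (l₁ := (w.take k).filter (fun a => decide (a ∈ w₁.toFinset)))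
    (l₂ := (w.drop k).filter (fun a => decide (a ∈ w₁.toFinset)))
  rw [h] at h2
  exact h2.symm

lemma shuffle_filter_drop {w₁ w₂ w : List α} (hsh : IsShuffle w₁ w₂ w) (k : ℕ) :
    (w.drop k).filter (fun a => decide (a ∈ w₁.toFinset)) =
      w₁.drop ((w.take k).filter (fun a => decide (a ∈ w₁.toFinset))).length := by
  have h : (w.take k).filter (fun a => decide (a ∈ w₁.toFinset)) ++
      (w.drop k).filter (fun a => decide (a ∈ w₁.toFinset)) = w₁ := by
    rw [← List.filter_append, List.take_append_drop]
    exact hsh.2.2.1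
  have h2 := List.drop_left (l₁ := (w.take k).filter (fun a => decide (a ∈ w₁.toFinset)))
    (l₂ := (w.drop k).filter (fun a => decide (a ∈ w₁.toFinset)))
  rw [h] at h2
  exact h2.symm

lemma shuffle_symm {w₁ w₂ w : List α} (hsh : IsShuffle w₁ w₂ w) : IsShuffle w₂ w₁ w :=
  ⟨hsh.1, by rw [hsh.2.1, Finset.union_comm], hsh.2.2.2, hsh.2.2.1⟩

lemma mem_of_filter_eq {u t l : List α} {a : α}
    (h : l.filter (fun a => decide (a ∈ u.toFinset)) = t)
    (ha : a ∈ l) (hu : a ∈ u) : a ∈ t := by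
  rw [← h]
  exact List.mem_filter.2 ⟨ha, decide_eq_true (List.mem_toFinset.2 hu)⟩

lemma of_mem_of_filter_eq {u t l : List α} {a : α}
    (h : l.filter (fun a => decide (a ∈ u.toFinset)) = t)
    (ha : a ∈ t) : a ∈ l ∧ a ∈ u := by
  rw [← h] at ha
  exact ⟨(List.mem_filter.1 ha).1,
    List.mem_toFinset.1 (of_decide_eq_true (List.mem_filter.1 ha).2)⟩

lemma filter_congr_aux {u t l : List α}
    (h : l.filter (fun a => decide (a ∈ u.toFinset)) = t)
    (ht : ∀ a ∈ t, a ∈ u) :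
    l.filter (fun a => decide (a ∈ t.toFinset)) = t := by
  have hcong : ∀ a ∈ l, (decide (a ∈ t.toFinset)) = (decide (a ∈ u.toFinset)) := by
    intro a ha
    apply decide_eq_decide.2
    constructor
    · intro h'
      exact List.mem_toFinset.2 (ht a (List.mem_toFinset.1 h'))
    · intro h'
      exact List.mem_toFinset.2 (mem_of_filter_eq h ha (List.mem_toFinset.1 h'))
  exact (List.filter_congr hcong).trans h

lemma shuffle_take_shuffle {w₁ w₂ w : List α} (hsh : IsShuffle w₁ w₂ w) (k : ℕ) :
    ∃ k₁ k₂ : ℕ,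
      (w.take k).toFinset ∩ w₁.toFinset = (w₁.take k₁).toFinset ∧
      (w.take k).toFinset ∩ w₂.toFinset = (w₂.take k₂).toFinset ∧
      IsShuffle (w₁.take k₁) (w₂.take k₂) (w.take k) ∧
      IsShuffle (w₁.drop k₁) (w₂.drop k₂) (w.drop k) := by
  classical
  have ht1 := shuffle_filter_take hsh k
  have ht2 := shuffle_filter_take (shuffle_symm hsh) k
  have hd1 := shuffle_filter_drop hsh k
  have hd2 := shuffle_filter_drop (shuffle_symm hsh) k
  refine ⟨((w.take k).filter (fun a => decide (a ∈ w₁.toFinset))).length,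
    ((w.take k).filter (fun a => decide (a ∈ w₂.toFinset))).length, ?_, ?_,
    ⟨(List.take_sublist k w).nodup hsh.1, ?_, ?_, ?_⟩,
    ⟨(List.drop_sublist k w).nodup hsh.1, ?_, ?_, ?_⟩⟩
  · -- inter 1
    ext a
    rw [Finset.mem_inter]
    constructor
    · rintro ⟨h1, h2⟩
      exact List.mem_toFinset.2
        (mem_of_filter_eq ht1 (List.mem_toFinset.1 h1) (List.mem_toFinset.1 h2))
    · intro h
      obtain ⟨h1, h2⟩ := of_mem_of_filter_eq ht1 (List.mem_toFinset.1 h)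
      exact ⟨List.mem_toFinset.2 h1, List.mem_toFinset.2 h2⟩
  · -- inter 2
    ext a
    rw [Finset.mem_inter]
    constructor
    · rintro ⟨h1, h2⟩
      exact List.mem_toFinset.2
        (mem_of_filter_eq ht2 (List.mem_toFinset.1 h1) (List.mem_toFinset.1 h2))
    · intro h
      obtain ⟨h1, h2⟩ := of_mem_of_filter_eq ht2 (List.mem_toFinset.1 h)
      exact ⟨List.mem_toFinset.2 h1, List.mem_toFinset.2 h2⟩
  · -- toFinset of take k
    ext a
    constructor
    · intro ha0
      have ha : a ∈ w.take k := List.mem_toFinset.1 ha0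
      have haw : a ∈ w.toFinset := List.mem_toFinset.2 ((List.take_sublist k w).mem ha)
      rw [hsh.2.1] at haw
      rcases Finset.mem_union.1 haw with h | h
      · exact Finset.mem_union_left _
          (List.mem_toFinset.2 (mem_of_filter_eq ht1 ha (List.mem_toFinset.1 h)))
      · exact Finset.mem_union_right _
          (List.mem_toFinset.2 (mem_of_filter_eq ht2 ha (List.mem_toFinset.1 h)))
    · intro ha0
      rcases Finset.mem_union.1 ha0 with h | h
      · exact List.mem_toFinset.2
          (of_mem_of_filter_eq ht1 (List.mem_toFinset.1 h)).1
      · exact List.mem_toFinset.2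
          (of_mem_of_filter_eq ht2 (List.mem_toFinset.1 h)).1
  · exact filter_congr_aux ht1 (fun a ha => (List.take_sublist _ _).mem ha)
  · exact filter_congr_aux ht2 (fun a ha => (List.take_sublist _ _).mem ha)
  · -- toFinset of drop k
    ext a
    constructor
    · intro ha0
      have ha : a ∈ w.drop k := List.mem_toFinset.1 ha0
      have haw : a ∈ w.toFinset := List.mem_toFinset.2 ((List.drop_sublist k w).mem ha)
      rw [hsh.2.1] at haw
      rcases Finset.mem_union.1 haw with h | h
      · exact Finset.mem_union_left _
          (List.mem_toFinset.2 (mem_of_filter_eq hd1 ha (List.mem_toFinset.1 h)))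
      · exact Finset.mem_union_right _
          (List.mem_toFinset.2 (mem_of_filter_eq hd2 ha (List.mem_toFinset.1 h)))
    · intro ha0
      rcases Finset.mem_union.1 ha0 with h | h
      · exact List.mem_toFinset.2
          (of_mem_of_filter_eq hd1 (List.mem_toFinset.1 h)).1
      · exact List.mem_toFinset.2
          (of_mem_of_filter_eq hd2 (List.mem_toFinset.1 h)).1
  · exact filter_congr_aux hd1 (fun a ha => (List.drop_sublist _ _).mem ha)
  · exact filter_congr_aux hd2 (fun a ha => (List.drop_sublist _ _).mem ha)

lemma isOrdered_joinC {w₁ w₂ w : List α} {S₁ S₂ : Finset (Finset α)}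
    (h1 : IsOrderedComplex w₁ S₁) (h2 : IsOrderedComplex w₂ S₂)
    (hdis : Disjoint w₁.toFinset w₂.toFinset) (hsh : IsShuffle w₁ w₂ w) :
    IsOrderedComplex w (joinC S₁ S₂) := by
  refine ⟨hsh.1, fun σ hσ => ?_, isComplex_joinC hdis h1.2.1 h2.2.1 h1.2.2 h2.2.2⟩
  rw [hsh.2.1]
  exact ((mem_joinC_iff hdis h1.2.1 h2.2.1).1 hσ).1

lemma od_join_aux : ∀ (n : ℕ) (w₁ w₂ w : List α) (S₁ S₂ : Finset (Finset α)),
    w.length ≤ n →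
    IsOrderedComplex w₁ S₁ → OrderDecomposable w₁ S₁ →
    IsOrderedComplex w₂ S₂ → OrderDecomposable w₂ S₂ →
    Disjoint w₁.toFinset w₂.toFinset → IsShuffle w₁ w₂ w →
    OrderDecomposable w (joinC S₁ S₂) := by
  intro n
  induction n using Nat.strong_induction_on with
  | _ n ih =>
  intro w₁ w₂ w S₁ S₂ hn h1 d1 h2 d2 hdis hsh
  rcases S₁.eq_empty_or_nonempty with rfl | hne1
  · rw [joinC_empty_left]; exact od_empty w
  rcases S₂.eq_empty_or_nonempty with rfl | hne2
  · rw [joinC_empty_right]; exact od_empty w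
  have he1 : ∅ ∈ S₁ := empty_mem_of_nonempty h1.2.2 hne1
  have he2 : ∅ ∈ S₂ := empty_mem_of_nonempty h2.2.2 hne2
  have hg1 := h1.2.1
  have hg2 := h2.2.1
  have key : ∀ k : ℕ, 0 < k → k < w.length →
      OrderDecomposable (w.take k) (restrictC (joinC S₁ S₂) (w.take k).toFinset) ∧
      OrderDecomposable (w.drop k) (contractC w (joinC S₁ S₂) (w.take k).toFinset) := by
    intro k hk hk'
    obtain ⟨k₁, k₂, hi1, hi2, hshT, hshD⟩ := shuffle_take_shuffle hsh k
    have hres_eq : restrictC (joinC S₁ S₂) (w.take k).toFinset =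
        joinC (restrictC S₁ (w₁.take k₁).toFinset) (restrictC S₂ (w₂.take k₂).toFinset) := by
      rw [restrictC_joinC hg1 hg2 (w.take k).toFinset, hi1, hi2]
    have hgR1 : ∀ σ ∈ restrictC S₁ (w₁.take k₁).toFinset, σ ⊆ w₁.toFinset :=
      fun σ hσ => (mem_restrictC.1 hσ).2.trans (toFinset_take_subset w₁ k₁)
    have hgR2 : ∀ σ ∈ restrictC S₂ (w₂.take k₂).toFinset, σ ⊆ w₂.toFinset :=
      fun σ hσ => (mem_restrictC.1 hσ).2.trans (toFinset_take_subset w₂ k₂)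
    have heR1 : ∅ ∈ restrictC S₁ (w₁.take k₁).toFinset :=
      mem_restrictC.2 ⟨he1, Finset.empty_subset _⟩
    have heR2 : ∅ ∈ restrictC S₂ (w₂.take k₂).toFinset :=
      mem_restrictC.2 ⟨he2, Finset.empty_subset _⟩
    constructor
    · rw [hres_eq]
      refine ih k (by omega) (w₁.take k₁) (w₂.take k₂) (w.take k) _ _
        (by rw [List.length_take]; omega)
        (isOrdered_restrict h1 k₁) (od_restrict h1 d1 k₁)
        (isOrdered_restrict h2 k₂) (od_restrict h2 d2 k₂)
        (hdis.mono (toFinset_take_subset w₁ k₁) (toFinset_take_subset w₂ k₂)) hshT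
    · have hmin_eq : lexMinFacet w (restrictC (joinC S₁ S₂) (w.take k).toFinset) =
          lexMinFacet w₁ (restrictC S₁ (w₁.take k₁).toFinset) ∪
          lexMinFacet w₂ (restrictC S₂ (w₂.take k₂).toFinset) := by
        rw [hres_eq, lexMinFacet_joinC hdis hgR1 hgR2 heR1 heR2 w, hsh.2.2.1, hsh.2.2.2]
      have hm1 : lexMinFacet w₁ (restrictC S₁ (w₁.take k₁).toFinset) ⊆ w₁.toFinset :=
        hgR1 _ (lexMinFacet_mem heR1)
      have hm2 : lexMinFacet w₂ (restrictC S₂ (w₂.take k₂).toFinset) ⊆ w₂.toFinset :=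
        hgR2 _ (lexMinFacet_mem heR2)
      have hcon_eq : contractC w (joinC S₁ S₂) (w.take k).toFinset =
          joinC (contractC w₁ S₁ (w₁.take k₁).toFinset)
            (contractC w₂ S₂ (w₂.take k₂).toFinset) := by
        rw [contractC, hmin_eq]
        exact linkC_joinC hdis hg1 hg2 hm1 hm2
      rw [hcon_eq]
      refine ih (w.drop k).length (by rw [List.length_drop]; omega) (w₁.drop k₁)
        (w₂.drop k₂) (w.drop k) _ _ le_rfl
        (isOrdered_contract h1 k₁) (od_contract h1 d1 k₁)
        (isOrdered_contract h2 k₂) (od_contract h2 d2 k₂)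
        (hdis.mono (toFinset_drop_subset w₁ k₁) (toFinset_drop_subset w₂ k₂)) hshD
  exact OrderDecomposable.pure w _
    (isPure_joinC hdis hg1 hg2 (od_pure d1) (od_pure d2))
    (fun k hk hk' => od_pure (key k hk hk').1)
    (fun k hk hk' => od_pure (key k hk hk').2)
    (fun k hk hk' => (key k hk hk').1)
    (fun k hk hk' => (key k hk hk').2)


/-- The class `𝒰` of all order-decomposable ordered complexes is a Hopf class. -/
theorem isHopfClass_orderDecomposable :
    IsHopfClass {p : List α × Finset (Finset α) |
      IsOrderedComplex p.1 p.2 ∧ OrderDecomposable p.1 p.2} := by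
  refine ⟨?_, ?_, ?_, ?_⟩
  · rintro ⟨w, S⟩ ⟨h1, h2⟩
    exact ⟨h1, od_pure h2⟩
  · rintro ⟨w₁, S₁⟩ ⟨h1, d1⟩ ⟨w₂, S₂⟩ ⟨h2, d2⟩ hdis w hsh
    exact ⟨isOrdered_joinC h1 h2 hdis hsh,
      od_join_aux w.length w₁ w₂ w S₁ S₂ le_rfl h1 d1 h2 d2 hdis hsh⟩
  · rintro ⟨w, S⟩ ⟨h1, h2⟩ k
    exact ⟨od_pure (od_restrict h1 h2 k), isOrdered_restrict h1 k, od_restrict h1 h2 k⟩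
  · rintro ⟨w, S⟩ ⟨h1, h2⟩ k
    exact ⟨isOrdered_contract h1 k, od_contract h1 h2 k⟩


end OrderedComplexes
end

section
/- Every Hopf class is contained in the class 𝒰 of order-decomposable ordered complexes; that is, if 𝒬 is a Hopf class and (w,Σ) ∈ 𝒬, then (w,Σ) is order-decomposable. -/
namespace OrderedComplexes

variable {α : Type*} [DecidableEq α]

/-- Every Hopf class is contained in the class `𝒰` of order-decomposable ordered
complexes: if `𝒬` is a Hopf class and `(w, Σ) ∈ 𝒬`, then `(w, Σ)` is
order-decomposable. -/
theorem hopfClass_subset_orderDecomposable (Q : Set (List α × Finset (Finset α)))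
    (hQ : IsHopfClass Q) :
    ∀ p ∈ Q, OrderDecomposable p.1 p.2 := by
  obtain ⟨h1, _h2, h3, h4⟩ := hQ
  have key : ∀ n : ℕ, ∀ p ∈ Q, p.1.length ≤ n → OrderDecomposable p.1 p.2 := by
    intro n
    induction n with
    | zero =>
      intro p hp hl
      exact OrderDecomposable.pure _ _ (h1 p hp).2
        (fun k hk hk' => absurd (hk.trans hk') (by omega))
        (fun k hk hk' => absurd (hk.trans hk') (by omega))
        (fun k hk hk' => absurd (hk.trans hk') (by omega))
        (fun k hk hk' => absurd (hk.trans hk') (by omega))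
    | succ n ih =>
      intro p hp hl
      refine OrderDecomposable.pure _ _ (h1 p hp).2
        (fun k _ _ => (h3 p hp k).1)
        (fun k _ _ => (h1 _ (h4 p hp k)).2)
        (fun k hk hk' => ?_) (fun k hk hk' => ?_)
      · exact ih _ (h3 p hp k).2 (by simp; omega)
      · exact ih _ (h4 p hp k) (by simp; omega)
  intro p hp
  exact key p.1.length p hp le_rfl

end OrderedComplexes
end
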